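/- arXiv:2506.13659 — 4 statements merged into one kernel-verified Lean document; each statement's English description precedes it below -/
import Mathlib

section
/- Let H be a connected finite simple graph on t ≥ 2 vertices. If the support of the K_q-chromatic function h_H(−; K_q) is M-convex for some q ≥ t, then the support of h_H(−; G) is M-convex for every antiferromagnetic weighted graph G. -/
open SimpleGraph

/-- The weight a symmetric matrix `G` puts on an unordered pair of indices. -/
noncomputable def edgeWeight {n : ℕ} (G : Matrix (Fin n) (Fin n) ℝ) (hG : G.IsHermitian) :
    Sym2 (Fin n) → ℝ :=
  Sym2.lift ⟨fun i j => G i j, fun i j => by simpa using hG.apply j i⟩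

-- The `G`-chromatic function `h_H(x₁,…,x_n; G)`.
open scoped Classical in
noncomputable def chromPoly {V : Type} [Fintype V] {n : ℕ} (H : SimpleGraph V)
    (G : Matrix (Fin n) (Fin n) ℝ) (hG : G.IsHermitian) : MvPolynomial (Fin n) ℝ :=
  ∑ φ : V → Fin n,
    MvPolynomial.C (∏ e ∈ H.edgeFinset, edgeWeight G hG (e.map φ)) *
      ∏ v : V, MvPolynomial.X (φ v)

/-- `S ⊆ ℕ^n` is M-convex. -/
def MConvex {n : ℕ} (S : Set (Fin n →₀ ℕ)) : Prop :=
  ∀ a ∈ S, ∀ b ∈ S, ∀ i : Fin n, b i < a i →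
    ∃ j : Fin n, a j < b j ∧ a - Finsupp.single i 1 + Finsupp.single j 1 ∈ S

/-- The adjacency matrix of the complete graph `K_q`. -/
def adjKq (q : ℕ) : Matrix (Fin q) (Fin q) ℝ :=
  fun i j => if i = j then 0 else 1

lemma adjKq_isHermitian (q : ℕ) : (adjKq q).IsHermitian := by
  ext i j
  by_cases h : i = j <;>
    simp [adjKq, Matrix.conjTranspose_apply, h, eq_comm]

----------------------------------------------------------------
-- Section 1 : support characterization
----------------------------------------------------------------

open scoped Classical

noncomputable def cnt {V : Type} [Fintype V] {n : ℕ} (φ : V → Fin n) : Fin n →₀ ℕ :=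
  ∑ v : V, Finsupp.single (φ v) 1

/-- admissibility of a colouring -/
def Adm {V : Type} {n : ℕ} (H : SimpleGraph V) (G : Matrix (Fin n) (Fin n) ℝ)
    (φ : V → Fin n) : Prop :=
  ∀ u v : V, H.Adj u v → G (φ u) (φ v) ≠ 0

variable {V : Type} [Fintype V] {n : ℕ}

lemma cnt_apply (φ : V → Fin n) (k : Fin n) :
    cnt φ k = (Finset.univ.filter (fun v => φ v = k)).card := by
  classical
  rw [cnt]
  rw [Finsupp.finset_sum_apply]
  rw [Finset.card_filter]
  apply Finset.sum_congr rfl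
  intro v _
  by_cases h : φ v = k <;> simp [h, Finsupp.single_apply]

lemma cnt_sum (φ : V → Fin n) : (cnt φ).sum (fun _ m => m) = Fintype.card V := by
  classical
  rw [cnt]
  -- sum of finsupp sum
  have : ∀ s : Finset V, ((∑ v ∈ s, Finsupp.single (φ v) 1 : Fin n →₀ ℕ).sum fun _ m => m)
      = s.card := by
    intro s
    induction s using Finset.induction with
    | empty => simp
    | insert _ _ hx ih =>
      rw [Finset.sum_insert hx, Finsupp.sum_add_index (by simp) (by simp), ih]
      simp [Finsupp.sum_single_index, Finset.card_insert_of_notMem hx, Nat.add_comm]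
  simpa using this Finset.univ

lemma prod_X_eq_monomial (φ : V → Fin n) :
    (∏ v : V, (MvPolynomial.X (φ v) : MvPolynomial (Fin n) ℝ)) =
      MvPolynomial.monomial (cnt φ) 1 := by
  classical
  have : ∀ s : Finset V, (∏ v ∈ s, (MvPolynomial.X (φ v) : MvPolynomial (Fin n) ℝ)) =
      MvPolynomial.monomial (∑ v ∈ s, Finsupp.single (φ v) 1) 1 := by
    intro s
    induction s using Finset.induction with
    | empty => simp
    | insert _ _ hx ih =>
      rw [Finset.prod_insert hx, Finset.sum_insert hx, ih, MvPolynomial.X,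
        MvPolynomial.monomial_mul, one_mul]
  simpa [cnt] using this Finset.univ

lemma edgeWeight_mk {q : ℕ} (M : Matrix (Fin q) (Fin q) ℝ) (hM : M.IsHermitian)
    (i j : Fin q) : edgeWeight M hM s(i, j) = M i j := rfl

/-- the weight of a colouring -/
noncomputable def wt {q : ℕ} (H : SimpleGraph V) (M : Matrix (Fin q) (Fin q) ℝ)
    (hM : M.IsHermitian) (φ : V → Fin q) : ℝ :=
  ∏ e ∈ H.edgeFinset, edgeWeight M hM (e.map φ)

lemma wt_nonneg {q : ℕ} (H : SimpleGraph V) (M : Matrix (Fin q) (Fin q) ℝ)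
    (hM : M.IsHermitian) (hnn : ∀ i j, 0 ≤ M i j) (φ : V → Fin q) :
    0 ≤ wt H M hM φ := by
  apply Finset.prod_nonneg
  intro e _
  induction e with
  | _ u v => simpa [Sym2.map_pair_eq, edgeWeight_mk] using hnn (φ u) (φ v)

lemma wt_ne_zero_iff {q : ℕ} (H : SimpleGraph V) (M : Matrix (Fin q) (Fin q) ℝ)
    (hM : M.IsHermitian) (φ : V → Fin q) :
    wt H M hM φ ≠ 0 ↔ Adm H M φ := by
  classical
  rw [wt, Finset.prod_ne_zero_iff]
  constructor
  · intro h u v huv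
    have := h s(u, v) (by simpa [SimpleGraph.mem_edgeFinset] using huv)
    simpa [Sym2.map_pair_eq, edgeWeight_mk] using this
  · intro h e he
    induction e with
    | _ u v =>
      have huv : H.Adj u v := by simpa [SimpleGraph.mem_edgeFinset] using he
      simpa [Sym2.map_pair_eq, edgeWeight_mk] using h u v huv

lemma coeff_chromPoly {q : ℕ} (H : SimpleGraph V) (M : Matrix (Fin q) (Fin q) ℝ)
    (hM : M.IsHermitian) (a : Fin q →₀ ℕ) :
    (chromPoly H M hM).coeff a =
      ∑ φ : V → Fin q, if cnt φ = a then wt H M hM φ else 0 := by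
  classical
  rw [chromPoly, MvPolynomial.coeff_sum]
  apply Finset.sum_congr rfl
  intro φ _
  rw [prod_X_eq_monomial, MvPolynomial.coeff_C_mul, MvPolynomial.coeff_monomial]
  by_cases h : cnt φ = a <;> simp [h, wt, eq_comm]

lemma mem_support_iff {q : ℕ} (H : SimpleGraph V) (M : Matrix (Fin q) (Fin q) ℝ)
    (hM : M.IsHermitian) (hnn : ∀ i j, 0 ≤ M i j) (a : Fin q →₀ ℕ) :
    a ∈ (chromPoly H M hM).support ↔ ∃ φ : V → Fin q, Adm H M φ ∧ cnt φ = a := by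
  classical
  rw [MvPolynomial.mem_support_iff, coeff_chromPoly]

  constructor
  · intro h
    obtain ⟨φ, -, hφ⟩ := Finset.exists_ne_zero_of_sum_ne_zero h
    by_cases hc : cnt φ = a
    · exact ⟨φ, (wt_ne_zero_iff H M hM φ).1 (by simpa [hc] using hφ), hc⟩
    · simp [hc] at hφ
  · rintro ⟨φ, hφ, hc⟩
    have hpos : ∀ ψ : V → Fin q, 0 ≤ if cnt ψ = a then wt H M hM ψ else 0 := by
      intro ψ
      by_cases h : cnt ψ = a <;> simp [h, wt_nonneg H M hM hnn]
    intro h0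
    have := (Finset.sum_eq_zero_iff_of_nonneg (fun ψ _ => hpos ψ)).1 h0 φ (Finset.mem_univ φ)
    rw [if_pos hc] at this
    exact (wt_ne_zero_iff H M hM φ).2 hφ this


namespace Sec2

variable {n : ℕ} {G : Matrix (Fin n) (Fin n) ℝ}

noncomputable def BF (G : Matrix (Fin n) (Fin n) ℝ) (x y : Fin n → ℝ) : ℝ :=
  dotProduct x (G.mulVec y)

noncomputable def coords (hG : G.IsHermitian) (x : Fin n → ℝ) : Fin n → ℝ :=
  Matrix.mulVec (star (hG.eigenvectorUnitary : Matrix (Fin n) (Fin n) ℝ)) x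

lemma BF_expansion (hG : G.IsHermitian) (x y : Fin n → ℝ) :
    BF G x y = ∑ k, hG.eigenvalues k * (coords hG x k) * (coords hG y k) := by
  classical
  set U := (hG.eigenvectorUnitary : Matrix (Fin n) (Fin n) ℝ) with hU
  have hRO : (RCLike.ofReal : ℝ → ℝ) = id := by ext x; simp
  have hspec : G = U * Matrix.diagonal hG.eigenvalues * star U := by
    have := hG.spectral_theorem
    rw [hRO] at this
    simpa using this
  have hentry : ∀ i j, G i j = ∑ k, hG.eigenvalues k * U i k * U j k := by
    intro i j
    have := congrFun (congrFun hspec i) j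
    rw [this]
    rw [Matrix.mul_apply]
    apply Finset.sum_congr rfl
    intro k _
    rw [Matrix.mul_diagonal]
    have : (star U) k j = U j k := by
      rw [Matrix.star_apply]; simp
    rw [this]; ring
  have hcoords : ∀ z : Fin n → ℝ, ∀ k, coords hG z k = ∑ i, U i k * z i := by
    intro z k
    show Matrix.mulVec (star U) z k = _
    rw [Matrix.mulVec, dotProduct]
    apply Finset.sum_congr rfl
    intro i _
    have : (star U) k i = U i k := by
      rw [Matrix.star_apply]; simp
    rw [this]
  calc BF G x y = ∑ i, ∑ j, ∑ k, hG.eigenvalues k * U i k * U j k * (x i * y j) := by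
        rw [BF, dotProduct]
        apply Finset.sum_congr rfl
        intro i _
        rw [Matrix.mulVec, dotProduct, Finset.mul_sum]
        apply Finset.sum_congr rfl
        intro j _
        rw [hentry i j, Finset.sum_mul, Finset.mul_sum]
        apply Finset.sum_congr rfl
        intro k _
        ring
    _ = ∑ i, ∑ k, ∑ j, hG.eigenvalues k * U i k * U j k * (x i * y j) := by
        apply Finset.sum_congr rfl
        intro i _
        rw [Finset.sum_comm]
    _ = ∑ k, ∑ i, ∑ j, hG.eigenvalues k * U i k * U j k * (x i * y j) := Finset.sum_comm
    _ = ∑ k, hG.eigenvalues k * (coords hG x k) * (coords hG y k) := by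
        apply Finset.sum_congr rfl
        intro k _
        rw [hcoords x k, hcoords y k, mul_assoc, Finset.sum_mul_sum, Finset.mul_sum]
        apply Finset.sum_congr rfl
        intro i _
        rw [Finset.mul_sum]
        apply Finset.sum_congr rfl
        intro j _
        ring

lemma BF_symm (hG : G.IsHermitian) (x y : Fin n → ℝ) : BF G x y = BF G y x := by
  rw [BF_expansion hG, BF_expansion hG]
  apply Finset.sum_congr rfl
  intro k _; ring

/-- **Key spectral lemma**: an antiferromagnetic matrix admits no pair of
`G`-orthogonal vectors that are both positive for the quadratic form. -/
lemma no_ortho_pair (hG : G.IsHermitian)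
    (hafm : {i | 0 < hG.eigenvalues i}.Subsingleton)
    (x y : Fin n → ℝ) (hx : 0 < BF G x x) (hy : 0 < BF G y y) :
    BF G x y ≠ 0 := by
  classical
  intro hxy
  set lam := hG.eigenvalues with hlam
  set cx := coords hG x with hcx
  set cy := coords hG y with hcy
  rw [BF_expansion hG] at hx hy hxy
  by_cases hpos : ∃ k0, 0 < lam k0
  · obtain ⟨k0, hk0⟩ := hpos
    have hneg : ∀ k, k ≠ k0 → lam k ≤ 0 := by
      intro k hk
      by_contra h
      exact hk (hafm (by simpa using lt_of_not_ge h) hk0)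
    set α := cx k0 with hα
    set β := cy k0 with hβ
    set d : Fin n → ℝ := fun k => β * cx k - α * cy k with hd
    have hdk0 : d k0 = 0 := by simp [hd, hα, hβ]; ring
    have hexp : ∀ k : Fin n, lam k * d k * d k =
        β * β * (lam k * cx k * cx k) + α * α * (lam k * cy k * cy k)
        - 2 * α * β * (lam k * cx k * cy k) := by
      intro k; simp only [hd]; ring
    have hsum : ∑ k, lam k * d k * d k =
        β * β * (∑ k, lam k * cx k * cx k) + α * α * (∑ k, lam k * cy k * cy k)
        - 2 * α * β * (∑ k, lam k * cx k * cy k) := by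
      rw [Finset.sum_congr rfl (fun k _ => hexp k), Finset.sum_sub_distrib,
        Finset.sum_add_distrib, ← Finset.mul_sum, ← Finset.mul_sum, ← Finset.mul_sum]
    rw [hxy] at hsum
    have hle : ∑ k, lam k * d k * d k ≤ 0 := by
      apply Finset.sum_nonpos
      intro k _
      by_cases hk : k = k0
      · subst hk; rw [hdk0]; ring_nf; exact le_refl 0
      · have := hneg k hk
        nlinarith [sq_nonneg (d k)]
    have h1 : β * β * (∑ k, lam k * cx k * cx k) + α * α * (∑ k, lam k * cy k * cy k) ≤ 0 := by
      nlinarith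
    have hb2 : 0 ≤ β * β * (∑ k, lam k * cx k * cx k) :=
      mul_nonneg (mul_self_nonneg β) hx.le
    have ha2 : 0 ≤ α * α * (∑ k, lam k * cy k * cy k) :=
      mul_nonneg (mul_self_nonneg α) hy.le
    have hb0 : β * β * (∑ k, lam k * cx k * cx k) = 0 := le_antisymm (by linarith) hb2
    have ha0 : α * α * (∑ k, lam k * cy k * cy k) = 0 := le_antisymm (by linarith) ha2
    have hα0 : α = 0 := by
      rcases mul_eq_zero.1 ha0 with h | h
      · exact mul_self_eq_zero.1 h
      · exact absurd h (ne_of_gt hy)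
    -- now the x-form is nonpositive, contradiction
    have hcx0 : cx k0 = 0 := hα ▸ hα0
    have : ∑ k, lam k * cx k * cx k ≤ 0 := by
      apply Finset.sum_nonpos
      intro k _
      by_cases hk : k = k0
      · subst hk; rw [hcx0]; ring_nf; exact le_refl 0
      · have := hneg k hk
        nlinarith [sq_nonneg (cx k)]
    linarith
  · push_neg at hpos
    have : ∑ k, lam k * cx k * cx k ≤ 0 := by
      apply Finset.sum_nonpos
      intro k _
      have := hpos k
      nlinarith [sq_nonneg (cx k)]
    linarith

-- BF api
lemma BF_add_left (x x' y : Fin n → ℝ) : BF G (x + x') y = BF G x y + BF G x' y := by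
  simp [BF, add_dotProduct]

lemma BF_add_right (x y y' : Fin n → ℝ) : BF G x (y + y') = BF G x y + BF G x y' := by
  simp [BF, Matrix.mulVec_add, dotProduct_add]

lemma BF_single (a b : ℝ) (i j : Fin n) :
    BF G (Pi.single i a) (Pi.single j b) = a * b * G i j := by
  classical
  simp [BF, Matrix.mulVec, dotProduct, Pi.single_apply, Finset.mul_sum,
    mul_ite, ite_mul, Finset.sum_ite_eq, Finset.sum_ite_eq']
  ring

end Sec2



namespace Sec3
open Sec2

variable {n : ℕ} {G : Matrix (Fin n) (Fin n) ℝ}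

/-- `i` is an active vertex -/
def Act (G : Matrix (Fin n) (Fin n) ℝ) (i : Fin n) : Prop := ∃ k, G i k ≠ 0

/-- `i` has a loop -/
def Lp (G : Matrix (Fin n) (Fin n) ℝ) (i : Fin n) : Prop := G i i ≠ 0

lemma hsym (hG : G.IsHermitian) (i j : Fin n) : G i j = G j i := by
  have := congrFun (congrFun hG i) j
  rw [← this, Matrix.conjTranspose_apply]
  simp

variable (hG : G.IsHermitian) (hnn : ∀ i j, 0 ≤ G i j)
  (hafm : {i | 0 < hG.eigenvalues i}.Subsingleton)

include hG hnn hafm in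
lemma S1 {i j : Fin n} (hij : i ≠ j) (hi : G i i ≠ 0) (hj : G j j ≠ 0) : G i j ≠ 0 := by
  intro h0
  have hx : 0 < BF G (Pi.single i (1:ℝ)) (Pi.single i 1) := by
    rw [BF_single]
    have := (hnn i i).lt_of_ne (Ne.symm hi)
    linarith
  have hy : 0 < BF G (Pi.single j (1:ℝ)) (Pi.single j 1) := by
    rw [BF_single]
    have := (hnn j j).lt_of_ne (Ne.symm hj)
    linarith
  exact no_ortho_pair hG hafm _ _ hx hy (by rw [BF_single]; simp [h0])

include hG hnn hafm in
lemma S2 {i j : Fin n} (hi : G i i ≠ 0) (hj : Act G j) (hji : j ≠ i) : G i j ≠ 0 := by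
  intro h0
  obtain ⟨k, hk⟩ := hj
  by_cases hkj : k = j
  · subst hkj
    refine S1 hG hnn hafm (Ne.symm hji) hi hk ?_
    rw [hsym hG i k] at h0; rw [hsym hG i k]; exact h0
  by_cases hki : k = i
  · subst hki
    rw [hsym hG j k] at hk
    exact hk h0
  -- main case : k ∉ {i,j}
  have hjj : G j j = 0 := by
    by_contra hjj
    exact S1 hG hnn hafm (Ne.symm hji) hi hjj h0
  set α := G i i with hα
  set c := G j k with hc
  set γ := G k k with hγ
  set g := G i k with hg
  have hαpos : 0 < α := (hnn i i).lt_of_ne (Ne.symm hi)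
  have hcpos : 0 < c := (hnn j k).lt_of_ne (Ne.symm hk)
  have hγnn : 0 ≤ γ := hnn k k
  have hgnn : 0 ≤ g := hnn i k
  set E := g * g + 1 with hE
  have hEpos : 0 < E := by nlinarith
  set ε := α * c / E with hε
  have hεpos : 0 < ε := by positivity
  have hεE : ε * E = α * c := by
    rw [hε]; field_simp
  set x : Fin n → ℝ := Pi.single i (1:ℝ) with hx
  set y : Fin n → ℝ := Pi.single j α + Pi.single k (ε * α) + Pi.single i (-(ε * g)) with hy
  have hQx : BF G x x = α := by rw [hx, BF_single]; ring
  have hQy : BF G y y = ε * α * (ε * α * γ + ε + α * c) := by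
    rw [hy]
    simp only [BF_add_left, BF_add_right, BF_single]
    have h1 : G j i = 0 := by rw [hsym hG j i]; exact h0
    have h3 : G k j = c := by rw [hsym hG k j]
    have h4 : G k i = g := by rw [hsym hG k i]
    rw [h1, h0, h3, h4, hjj, ← hc, ← hγ, ← hα, ← hg]
    have hgg : ε * (g * g) = α * c - ε := by nlinarith
    linear_combination (-(ε * α)) * hgg
  have hB : BF G x y = 0 := by
    rw [hx, hy]
    simp only [BF_add_right, BF_single]
    rw [h0, ← hg, ← hα]
    ring
  have hQxpos : 0 < BF G x x := by rw [hQx]; exact hαpos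
  have hQypos : 0 < BF G y y := by
    rw [hQy]
    have hinner : 0 < ε * α * γ + ε + α * c := by positivity
    exact mul_pos (mul_pos hεpos hαpos) hinner
  exact no_ortho_pair hG hafm x y hQxpos hQypos hB

include hG hnn hafm in
lemma S3 {i j k : Fin n} (hij : i ≠ j) (hAi : Act G i) (hAj : Act G j)
    (h0 : G i j = 0) (hki : k ≠ i) (hkj : k ≠ j) (he : G i k ≠ 0) : G j k ≠ 0 := by
  intro hjk
  have hii : G i i = 0 := by
    by_contra hii
    exact S2 hG hnn hafm hii hAj (Ne.symm hij) h0
  have hjj : G j j = 0 := by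
    by_contra hjj
    refine S2 hG hnn hafm hjj hAi hij ?_
    rw [hsym hG j i]; exact h0
  obtain ⟨k', hk'⟩ := hAj
  have hk'j : k' ≠ j := by rintro rfl; exact hk' hjj
  have hk'i : k' ≠ i := fun hh => by rw [hh, hsym hG j i] at hk'; exact hk' h0
  have hk'k : k' ≠ k := by rintro rfl; exact hk' hjk
  set e := G i k with he'
  set c := G j k' with hc
  set γ := G k k with hγ
  set δ := G k' k' with hδ
  set g := G i k' with hg
  set f := G k k' with hf
  have hepos : 0 < e := (hnn i k).lt_of_ne (Ne.symm he)
  have hcpos : 0 < c := (hnn j k').lt_of_ne (Ne.symm hk')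
  have hγnn : 0 ≤ γ := hnn k k
  have hδnn : 0 ≤ δ := hnn k' k'
  have hgnn : 0 ≤ g := hnn i k'
  have hfnn : 0 ≤ f := hnn k k'
  set E := (f + g) * g + 1 with hE
  have hEpos : 0 < E := by nlinarith
  set ε := c / E with hε
  have hεpos : 0 < ε := by positivity
  have hεE : ε * E = c := by rw [hε]; field_simp
  set x : Fin n → ℝ := Pi.single k (1:ℝ) + Pi.single i 1 with hx
  set y : Fin n → ℝ := Pi.single j (1:ℝ) + Pi.single k' (ε * e) + Pi.single i (-(ε * (f + g))) with hy
  have hQx : 0 < BF G x x := by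
    rw [hx]
    simp only [BF_add_left, BF_add_right, BF_single]
    have h4 : G k i = e := by rw [hsym hG k i]
    rw [h4, hii, ← hγ, ← he']
    nlinarith
  have hQy : 0 < BF G y y := by
    rw [hy]
    simp only [BF_add_left, BF_add_right, BF_single]
    have h1 : G j i = 0 := by rw [hsym hG j i]; exact h0
    have h2 : G k' j = c := by rw [hsym hG k' j]
    have h3 : G k' i = g := by rw [hsym hG k' i]
    rw [h1, h0, h2, h3, hjj, hii, ← hc, ← hδ, ← hg]
    have hgg : ε * ((f + g) * g) = c - ε := by nlinarith
    nlinarith [hgg, mul_pos hεpos hepos, sq_nonneg (ε * e), mul_nonneg (mul_nonneg hεpos.le hεpos.le) (mul_nonneg hepos.le (mul_nonneg hepos.le hδnn))]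
  have hB : BF G x y = 0 := by
    rw [hx, hy]
    simp only [BF_add_left, BF_add_right, BF_single]
    have h1 : G k j = 0 := by rw [hsym hG k j]; exact hjk
    rw [h1, h0, hii, ← hf, ← hg, hsym hG k i, ← he']
    ring
  exact no_ortho_pair hG hafm x y hQx hQy hB

/-- same-class relation -/
def Rel (G : Matrix (Fin n) (Fin n) ℝ) (i j : Fin n) : Prop :=
  Act G i ∧ Act G j ∧ (i = j ∨ G i j = 0)

lemma rel_self {i : Fin n} (h : Act G i) : Rel G i i := ⟨h, h, Or.inl rfl⟩

lemma rel_symm (hG : G.IsHermitian) {i j : Fin n} (h : Rel G i j) : Rel G j i := by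
  obtain ⟨h1, h2, h3⟩ := h
  refine ⟨h2, h1, ?_⟩
  rcases h3 with h | h
  · exact Or.inl h.symm
  · right; rw [hsym hG j i]; exact h

include hG hnn hafm in
lemma rel_trans {i j k : Fin n} (h1 : Rel G i j) (h2 : Rel G j k) : Rel G i k := by
  obtain ⟨hAi, hAj, hij⟩ := h1
  obtain ⟨-, hAk, hjk⟩ := h2
  refine ⟨hAi, hAk, ?_⟩
  rcases hij with rfl | hij
  · exact hjk
  rcases hjk with rfl | hjk
  · exact Or.inr hij
  by_cases hik : i = k
  · exact Or.inl hik
  right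
  by_cases hij' : i = j
  · subst hij'; exact hjk
  by_contra hik0
  have hkj : k ≠ j := by
    intro hh; subst hh
    exact hik0 hij
  exact S3 hG hnn hafm hij' hAi hAj hij (Ne.symm hik) hkj hik0 hjk

open scoped Classical in
/-- canonical representative of the class of `i` -/
noncomputable def rep (G : Matrix (Fin n) (Fin n) ℝ) (i : Fin n) : Fin n :=
  if h : Act G i then
    (Finset.univ.filter (fun k => Rel G i k)).min'
      ⟨i, by simp [rel_self h]⟩ else i

lemma rep_rel {i : Fin n} (h : Act G i) : Rel G i (rep G i) := by
  classical
  rw [rep, dif_pos h]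
  have := (Finset.univ.filter (fun k => Rel G i k)).min'_mem
    ⟨i, by simp [rel_self h]⟩
  simpa using this

include hG hnn hafm in
lemma rep_eq_of_rel {i j : Fin n} (h : Rel G i j) : rep G i = rep G j := by
  classical
  have hAi := h.1
  have hAj := h.2.1
  rw [rep, dif_pos hAi, rep, dif_pos hAj]
  congr 1
  apply Finset.filter_congr
  intro k _
  constructor
  · intro hk; exact rel_trans hG hnn hafm (rel_symm hG h) hk
  · intro hk; exact rel_trans hG hnn hafm h hk

include hG hnn hafm in
lemma rel_of_rep_eq {i j : Fin n} (hAi : Act G i) (hAj : Act G j)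
    (h : rep G i = rep G j) : Rel G i j := by
  have h1 := rep_rel (G := G) hAi
  have h2 := rep_rel (G := G) hAj
  rw [h] at h1
  exact rel_trans hG hnn hafm h1 (rel_symm hG h2)

include hG hnn hafm in
lemma loop_rel_eq {i j : Fin n} (hL : Lp G i) (h : Rel G i j) : i = j := by
  obtain ⟨hAi, hAj, hor⟩ := h
  by_contra hij
  rcases hor with h | h
  · exact hij h
  · exact S2 hG hnn hafm hL hAj (fun hh => hij hh.symm) h

include hG hnn hafm in
lemma adj_of_rep_ne {i j : Fin n} (hAi : Act G i) (hAj : Act G j)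
    (h : rep G i ≠ rep G j) : G i j ≠ 0 := by
  intro h0
  by_cases hij : i = j
  · subst hij; exact h rfl
  · exact h (rep_eq_of_rel hG hnn hafm ⟨hAi, hAj, Or.inr h0⟩)

include hG hnn hafm in
lemma loop_adj {i j : Fin n} (hL : Lp G i) (hAj : Act G j) : G i j ≠ 0 := by
  by_cases hij : i = j
  · subst hij; exact hL
  · exact S2 hG hnn hafm hL hAj (fun hh => hij hh.symm)

include hG hnn hafm in
lemma loop_rep_eq_self {i : Fin n} (hL : Lp G i) : rep G i = i :=
  (loop_rel_eq hG hnn hafm hL (rep_rel ⟨i, hL⟩)).symm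

include hG hnn hafm in
lemma rep_not_loop_of_not_loop {i : Fin n} (hAi : Act G i) (hL : ¬ Lp G i) :
    ¬ Lp G (rep G i) := by
  intro hLr
  have := loop_rel_eq hG hnn hafm hLr (rel_symm hG (rep_rel hAi))
  have hri : rep G i = i := this
  rw [hri] at hLr
  exact hL hLr

end Sec3



namespace Sec4

variable {V : Type} [Fintype V] {n : ℕ}

lemma exists_adj {H : SimpleGraph V} (hconn : H.Connected) (hcard : 2 ≤ Fintype.card V)
    (v : V) : ∃ u, H.Adj u v := by
  classical
  obtain ⟨w, hw⟩ := Fintype.exists_ne_of_one_lt_card (by omega) v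
  obtain ⟨p⟩ := hconn.preconnected v w
  cases p with
  | nil => exact absurd rfl hw.symm
  | cons h p' => exact ⟨_, h.symm⟩

lemma cnt_update [DecidableEq V] (φ : V → Fin n) (u : V) (j : Fin n) :
    cnt (Function.update φ u j) = cnt φ - Finsupp.single (φ u) 1 + Finsupp.single j 1 := by
  classical
  have h1 : cnt φ = Finsupp.single (φ u) 1 + ∑ v ∈ Finset.univ.erase u, Finsupp.single (φ v) 1 := by
    rw [cnt, ← Finset.add_sum_erase _ _ (Finset.mem_univ u)]
  have h2 : cnt (Function.update φ u j)
      = Finsupp.single j 1 + ∑ v ∈ Finset.univ.erase u, Finsupp.single (φ v) 1 := by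
    rw [cnt, ← Finset.add_sum_erase _ _ (Finset.mem_univ u), Function.update_self]
    congr 1
    apply Finset.sum_congr rfl
    intro v hv
    rw [Function.update_of_ne (Finset.ne_of_mem_erase hv)]
  rw [h1, h2, add_tsub_cancel_left]
  abel

end Sec4


namespace Sec4b

variable {V : Type} [Fintype V] {n : ℕ}

lemma exists_fiber_function [DecidableEq V] (k0 : Fin n) (F : Finset V) (d : Fin n → ℕ)
    (hd : ∑ k, d k = F.card) :
    ∃ f : V → Fin n, ∀ k, (F.filter (fun v => f v = k)).card = d k := by
  classical
  induction F using Finset.strongInduction generalizing d with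
  | _ F ih =>
  rcases Finset.eq_empty_or_nonempty F with rfl | ⟨v0, hv0⟩
  · refine ⟨fun _ => k0, fun k => ?_⟩
    have h0 : ∑ k, d k = 0 := by simpa using hd
    have : d k = 0 := by
      by_contra h
      have := Finset.sum_eq_zero_iff.mp h0 k (Finset.mem_univ k)
      exact h this
    simp [this]
  · have hpos : 0 < ∑ k, d k := by
      rw [hd]; exact Finset.card_pos.2 ⟨v0, hv0⟩
    obtain ⟨j0, hj0⟩ : ∃ j0, 0 < d j0 := by
      by_contra h
      push_neg at h
      have : ∑ k, d k = 0 := Finset.sum_eq_zero (fun k _ => Nat.le_zero.1 (h k))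
      omega
    set d' : Fin n → ℕ := Function.update d j0 (d j0 - 1) with hd'def
    have hsum1 : ∑ k, d k = d j0 + ∑ k ∈ Finset.univ.erase j0, d k := by
      rw [Finset.add_sum_erase _ _ (Finset.mem_univ j0)]
    have hsum2 : ∑ k, d' k = (d j0 - 1) + ∑ k ∈ Finset.univ.erase j0, d k := by
      rw [hd'def, Finset.sum_update_of_mem (Finset.mem_univ j0)]
      congr 1
      rw [Finset.sdiff_singleton_eq_erase]
    have hd' : ∑ k, d' k = (F.erase v0).card := by
      rw [Finset.card_erase_of_mem hv0]
      omega
    obtain ⟨f, hf⟩ := ih (F.erase v0) (Finset.erase_ssubset hv0) d' hd'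
    refine ⟨Function.update f v0 j0, fun k => ?_⟩
    by_cases hk : j0 = k
    · subst hk
      have heq : F.filter (fun v => Function.update f v0 j0 v = j0)
          = insert v0 ((F.erase v0).filter (fun v => f v = j0)) := by
        ext v
        simp only [Finset.mem_filter, Finset.mem_insert, Finset.mem_erase]
        constructor
        · rintro ⟨hvF, hv⟩
          by_cases hvv0 : v = v0
          · exact Or.inl hvv0
          · right
            rw [Function.update_of_ne hvv0] at hv
            exact ⟨⟨hvv0, hvF⟩, hv⟩
        · rintro (rfl | ⟨⟨hne, hvF⟩, hfv⟩)
          · exact ⟨hv0, by simp⟩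
          · exact ⟨hvF, by rw [Function.update_of_ne hne]; exact hfv⟩
      rw [heq, Finset.card_insert_of_notMem (by simp), hf j0]
      rw [hd'def, Function.update_self]
      omega
    · have heq : F.filter (fun v => Function.update f v0 j0 v = k)
          = (F.erase v0).filter (fun v => f v = k) := by
        ext v
        simp only [Finset.mem_filter, Finset.mem_erase]
        constructor
        · rintro ⟨hvF, hv⟩
          by_cases hvv0 : v = v0
          · subst hvv0; rw [Function.update_self] at hv; exact absurd hv hk
          · rw [Function.update_of_ne hvv0] at hv
            exact ⟨⟨hvv0, hvF⟩, hv⟩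
        · rintro ⟨⟨hne, hvF⟩, hfv⟩
          exact ⟨hvF, by rw [Function.update_of_ne hne]; exact hfv⟩
      rw [heq, hf k, hd'def, Function.update_of_ne (fun h => hk h.symm)]

end Sec4b



namespace Sec5
open Sec2 Sec3 Sec4

open scoped Classical

variable {V : Type} [Fintype V] {n q : ℕ} {H : SimpleGraph V}
  {G : Matrix (Fin n) (Fin n) ℝ}

/-- the class of vertices represented by `r` -/
noncomputable def KF (G : Matrix (Fin n) (Fin n) ℝ) (r : Fin n) : Finset (Fin n) :=
  Finset.univ.filter (fun k => Act G k ∧ ¬ Lp G k ∧ rep G k = r)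

/-- encoding a `G`-colouring as a `K_q`-colouring -/
noncomputable def enc (G : Matrix (Fin n) (Fin n) ℝ) (φ : V → Fin n)
    (fc : Fin n → Fin q) (β : V → Fin q) : V → Fin q :=
  fun v => if Lp G (φ v) then β v else fc (rep G (φ v))

lemma adjKq_ne_zero {x y : Fin q} : adjKq q x y ≠ 0 ↔ x ≠ y := by
  unfold adjKq
  by_cases h : x = y <;> simp [h]

variable (hG : G.IsHermitian) (hnn : ∀ i j, 0 ≤ G i j)
  (hafm : {i | 0 < hG.eigenvalues i}.Subsingleton)
  {φ : V → Fin n} {FR : Finset (Fin n)} {fc : Fin n → Fin q} {β : V → Fin q}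

include hG hnn hafm in
lemma enc_adm
    (hφ : Adm H G φ) (hA : ∀ v, Act G (φ v))
    (hfcinj : Set.InjOn fc FR)
    (hβinj : Set.InjOn β {v | Lp G (φ v)})
    (hdisj : ∀ r ∈ FR, ∀ v : V, Lp G (φ v) → fc r ≠ β v)
    (hrep : ∀ v, ¬ Lp G (φ v) → rep G (φ v) ∈ FR) :
    Adm H (adjKq q) (enc G φ fc β) := by
  intro u' v' hadj
  rw [adjKq_ne_zero]
  unfold enc
  by_cases h1 : Lp G (φ u') <;> by_cases h2 : Lp G (φ v') <;> simp only [h1, h2, if_pos, if_neg,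
    if_true, if_false]
  · -- both loops : β injective on loops, and u' ≠ v'
    intro heq
    have : u' = v' := hβinj h1 h2 heq
    exact H.irrefl (this ▸ hadj)
  · intro heq
    exact (hdisj _ (hrep v' h2) u' h1) heq.symm
  · intro heq
    exact (hdisj _ (hrep u' h1) v' h2) heq
  · -- both free
    intro heq
    have hrr : rep G (φ u') = rep G (φ v') := hfcinj (hrep u' h1) (hrep v' h2) heq
    have hrel := rel_of_rep_eq hG hnn hafm (hA u') (hA v') hrr
    rcases hrel.2.2 with h | h
    · exact h2 (show G (φ v') (φ v') ≠ 0 from h ▸ hφ u' v' hadj)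
    · exact hφ u' v' hadj h
omit hG hnn hafm

lemma enc_cnt_fc
    (hfcinj : Set.InjOn fc FR)
    (hA : ∀ v, Act G (φ v))
    (hdisj : ∀ r ∈ FR, ∀ v : V, Lp G (φ v) → fc r ≠ β v)
    (hrep : ∀ v, ¬ Lp G (φ v) → rep G (φ v) ∈ FR)
    {r : Fin n} (hr : r ∈ FR) :
    cnt (enc G φ fc β) (fc r) = ∑ k ∈ KF G r, cnt φ k := by
  rw [cnt_apply]
  have hset : Finset.univ.filter (fun v => enc G φ fc β v = fc r)
      = Finset.univ.filter (fun v => ¬ Lp G (φ v) ∧ rep G (φ v) = r) := by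
    ext v
    simp only [Finset.mem_filter, Finset.mem_univ, true_and]
    unfold enc
    by_cases h : Lp G (φ v)
    · rw [if_pos h]
      constructor
      · intro heq; exact absurd heq (hdisj r hr v h).symm
      · rintro ⟨h', -⟩; exact absurd h h'
    · rw [if_neg h]
      constructor
      · intro heq; exact ⟨h, (hfcinj (hrep v h) hr heq)⟩
      · rintro ⟨-, h'⟩; rw [h']
  rw [hset]
  rw [Finset.card_eq_sum_card_fiberwise (f := φ) (t := KF G r)]
  · apply Finset.sum_congr rfl
    intro k hk
    rw [cnt_apply]
    congr 1
    ext v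
    simp only [Finset.mem_filter, Finset.mem_univ, true_and, KF] at hk ⊢
    constructor
    · rintro ⟨-, h'⟩; exact h'
    · intro h'
      rw [h']
      exact ⟨⟨hk.2.1, hk.2.2⟩, rfl⟩
  · intro v hv
    simp only [Finset.mem_coe, Finset.mem_filter, Finset.mem_univ, true_and] at hv
    simp only [KF, Finset.mem_coe, Finset.mem_filter, Finset.mem_univ, true_and]
    exact ⟨hA v, hv.1, hv.2⟩

lemma enc_cnt_other
    (hrep : ∀ v, ¬ Lp G (φ v) → rep G (φ v) ∈ FR)
    {x : Fin q} (hx : ∀ r ∈ FR, fc r ≠ x) :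
    cnt (enc G φ fc β) x
      = (Finset.univ.filter (fun v => Lp G (φ v) ∧ β v = x)).card := by
  rw [cnt_apply]
  congr 1
  ext v
  simp only [Finset.mem_filter, Finset.mem_univ, true_and]
  unfold enc
  by_cases h : Lp G (φ v)
  · rw [if_pos h]
    tauto
  · rw [if_neg h]
    constructor
    · intro heq; exact absurd heq (hx _ (hrep v h))
    · intro hf; exact absurd hf.1 h

/-- ℕ-valued sum of the exchanged vector over a finite set -/
lemma sum_exchanged (a : Fin n →₀ ℕ) (i j : Fin n) (hij : i ≠ j) (hai : 1 ≤ a i)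
    (s : Finset (Fin n)) :
    ∑ k ∈ s, ((a - Finsupp.single i 1 + Finsupp.single j 1 : Fin n →₀ ℕ) k)
      = ∑ k ∈ s, a k - (if i ∈ s then 1 else 0) + (if j ∈ s then 1 else 0) := by
  have hpt : ∀ k, ((a - Finsupp.single i 1 + Finsupp.single j 1 : Fin n →₀ ℕ) k)
      = (a k - (if k = i then 1 else 0)) + (if k = j then 1 else 0) := by
    intro k
    rw [Finsupp.add_apply, Finsupp.tsub_apply, Finsupp.single_apply, Finsupp.single_apply]
    simp [eq_comm]
  rw [Finset.sum_congr rfl (fun k _ => hpt k), Finset.sum_add_distrib]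
  congr 1
  · -- ∑ (a k - δ_{ki}) = ∑ a k - [i ∈ s]
    by_cases hi : i ∈ s
    · rw [if_pos hi, ← Finset.add_sum_erase _ _ hi, ← Finset.add_sum_erase _ (fun k => a k) hi]
      rw [if_pos rfl]
      have h1 : ∀ k ∈ s.erase i, (a k - (if k = i then 1 else 0)) = a k := by
        intro k hk
        rw [if_neg (Finset.ne_of_mem_erase hk)]
        omega
      rw [Finset.sum_congr rfl h1]
      have hE : ∑ k ∈ s.erase i, a k = (s.erase i).sum ⇑a := rfl
      omega
    · rw [if_neg hi]
      rw [Nat.sub_zero]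
      apply Finset.sum_congr rfl
      intro k hk
      rw [if_neg (by rintro rfl; exact hi hk)]
      omega
  · rw [Finset.sum_ite_eq' s j (fun _ => 1)]

end Sec5
-- MAIN THEOREM (appended after all sections)
open Sec2 Sec3 Sec4 Sec4b Sec5

set_option maxHeartbeats 1000000 in
/-- Let `H` be a connected graph on `t ≥ 2` vertices. If the support of
`h_H(−; K_q)` is M-convex for some `q ≥ t`, then the support of `h_H(−; G)` is M-convex
for every antiferromagnetic weighted graph `G`. -/
theorem stmt5 {t : ℕ} (ht : 2 ≤ t) {V : Type} [Fintype V] (hcard : Fintype.card V = t)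
    (H : SimpleGraph V) (hconn : H.Connected)
    (q : ℕ) (hq : t ≤ q)
    (hKq : MConvex ((chromPoly H (adjKq q) (adjKq_isHermitian q)).support : Set (Fin q →₀ ℕ)))
    {n : ℕ} (G : Matrix (Fin n) (Fin n) ℝ) (hG : G.IsHermitian)
    (hnn : ∀ i j, 0 ≤ G i j)
    (hafm : {i | 0 < hG.eigenvalues i}.Subsingleton) :
    MConvex ((chromPoly H G hG).support : Set (Fin n →₀ ℕ)) := by
  classical
  have ht2 : 2 ≤ Fintype.card V := hcard ▸ ht
  have hmem : ∀ c : Fin n →₀ ℕ, c ∈ ((chromPoly H G hG).support : Set (Fin n →₀ ℕ))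
      ↔ ∃ φ : V → Fin n, Adm H G φ ∧ cnt φ = c := by
    intro c
    rw [Finset.mem_coe]
    exact mem_support_iff H G hG hnn c
  have hmemK : ∀ c : Fin q →₀ ℕ,
      c ∈ ((chromPoly H (adjKq q) (adjKq_isHermitian q)).support : Set (Fin q →₀ ℕ))
      ↔ ∃ ψ : V → Fin q, Adm H (adjKq q) ψ ∧ cnt ψ = c := by
    intro c
    rw [Finset.mem_coe]
    refine mem_support_iff H (adjKq q) (adjKq_isHermitian q) ?_ c
    intro x y
    unfold adjKq
    by_cases h : x = y <;> simp [h]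
  intro a ha b hb i hiab
  obtain ⟨φa, hφa, hca⟩ := (hmem a).1 ha
  obtain ⟨φb, hφb, hcb⟩ := (hmem b).1 hb
  subst hca
  subst hcb
  -- basic facts
  have hfiber : ∀ {m : ℕ} (φ : V → Fin m) (k : Fin m), cnt φ k ≠ 0 → ∃ v, φ v = k := by
    intro m φ k hk
    rw [cnt_apply] at hk
    obtain ⟨v, hv⟩ := Finset.card_ne_zero.1 hk
    simp only [Finset.mem_filter] at hv
    exact ⟨v, hv.2⟩
  have hfiber' : ∀ {m : ℕ} (φ : V → Fin m) (v : V), cnt φ (φ v) ≠ 0 := by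
    intro m φ v
    rw [cnt_apply]
    refine Finset.card_ne_zero.2 ⟨v, ?_⟩
    simp
  have hAa : ∀ v, Act G (φa v) := by
    intro v
    obtain ⟨w, hw⟩ := exists_adj hconn ht2 v
    exact ⟨φa w, by rw [hsym hG]; exact hφa w v hw⟩
  have hAb : ∀ v, Act G (φb v) := by
    intro v
    obtain ⟨w, hw⟩ := exists_adj hconn ht2 v
    exact ⟨φb w, by rw [hsym hG]; exact hφb w v hw⟩
  have hActa : ∀ k, cnt φa k ≠ 0 → Act G k := by
    intro k hk
    obtain ⟨v, rfl⟩ := hfiber φa k hk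
    exact hAa v
  have hActb : ∀ k, cnt φb k ≠ 0 → Act G k := by
    intro k hk
    obtain ⟨v, rfl⟩ := hfiber φb k hk
    exact hAb v
  obtain ⟨u, hu⟩ := hfiber φa i (by omega)
  have hAi : Act G i := hActa i (by omega)
  -- the update construction
  have hupd : ∀ j : Fin n, Adm H G (Function.update φa u j) →
      cnt φa - Finsupp.single i 1 + Finsupp.single j 1
        ∈ ((chromPoly H G hG).support : Set (Fin n →₀ ℕ)) := by
    intro j hadm
    exact (hmem _).2 ⟨Function.update φa u j, hadm, by rw [cnt_update, hu]⟩
  -- a sufficient condition for admissibility of the update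
  have hadm_of : ∀ j : Fin n, (∀ y, H.Adj u y → G j (φa y) ≠ 0) →
      Adm H G (Function.update φa u j) := by
    intro j hkey x y hxy
    by_cases hx : x = u <;> by_cases hy : y = u
    · subst hx; subst hy; exact absurd hxy (H.irrefl)
    · subst hx
      rw [Function.update_self, Function.update_of_ne hy]
      exact hkey y hxy
    · subst hy
      rw [Function.update_self, Function.update_of_ne hx]
      rw [hsym hG]
      exact hkey x hxy.symm
    · rw [Function.update_of_ne hx, Function.update_of_ne hy]
      exact hφa x y hxy
  -- Case C2 : a good loop colour exists
  by_cases hC2 : ∃ j, cnt φa j < cnt φb j ∧ Lp G j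
  · obtain ⟨j, hj, hLj⟩ := hC2
    refine ⟨j, hj, hupd j (hadm_of j ?_)⟩
    intro y _
    exact loop_adj hG hnn hafm hLj (hAa y)
  -- Case C1 : a good colour in the class of i exists
  by_cases hC1 : ∃ j, cnt φa j < cnt φb j ∧ j ≠ i ∧ Rel G i j
  · obtain ⟨j, hj, hji, hrel⟩ := hC1
    have hLi : ¬ Lp G i := by
      intro hL
      exact hji (loop_rel_eq hG hnn hafm hL hrel).symm
    refine ⟨j, hj, hupd j (hadm_of j ?_)⟩
    intro y hadj
    have hGi : G i (φa y) ≠ 0 := by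
      have := hφa u y hadj
      rwa [hu] at this
    have hnrel : ¬ Rel G i (φa y) := by
      intro hr
      rcases hr.2.2 with he | h0
      · rw [← he] at hGi
        exact hLi hGi
      · exact hGi h0
    have hrne : rep G j ≠ rep G (φa y) := by
      intro he
      have h1 : rep G i = rep G j := rep_eq_of_rel hG hnn hafm hrel
      exact hnrel (rel_of_rep_eq hG hnn hafm hAi (hAa y) (h1.trans he))
    exact adj_of_rep_ne hG hnn hafm hrel.2.1 (hAa y) hrne
  -- Case C3 : a good colour whose class misses the support of `a` exists
  by_cases hC3 : ∃ j, cnt φa j < cnt φb j ∧ ∀ k, cnt φa k ≠ 0 → ¬ Rel G j k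
  · obtain ⟨j, hj, hmiss⟩ := hC3
    have hAj : Act G j := hActb j (by omega)
    refine ⟨j, hj, hupd j (hadm_of j ?_)⟩
    intro y _
    have hnrel : ¬ Rel G j (φa y) := hmiss (φa y) (hfiber' φa y)
    have hrne : rep G j ≠ rep G (φa y) := by
      intro he
      exact hnrel (rel_of_rep_eq hG hnn hafm hAj (hAa y) he)
    exact adj_of_rep_ne hG hnn hafm hAj (hAa y) hrne
  -- Case C4 : the hard case
  push_neg at hC1 hC2 hC3
  -- hC1 : ∀ j, cnt φa j < cnt φb j → j ≠ i → ¬ Rel G i j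
  -- hC2 : ∀ j, cnt φa j < cnt φb j → ¬ Lp G j
  -- hC3 : ∀ j, cnt φa j < cnt φb j → ∃ k, cnt φa k ≠ 0 ∧ Rel G j k
  set La : Finset V := Finset.univ.filter (fun v => Lp G (φa v)) with hLa_def
  set Lb : Finset V := Finset.univ.filter (fun v => Lp G (φb v)) with hLb_def
  set KL : Finset (Fin n) := Finset.univ.filter (fun k => Lp G k) with hKL_def
  set Kn : Finset (Fin n) :=
    Finset.univ.filter (fun k => cnt φa k ≠ 0 ∧ ¬ Lp G k) with hKn_def
  set FRset : Finset (Fin n) := Kn.image (rep G) with hFR_def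
  -- loop-fibre counting
  have hLcard : ∀ φ : V → Fin n,
      (Finset.univ.filter (fun v => Lp G (φ v))).card = ∑ k ∈ KL, cnt φ k := by
    intro φ
    rw [Finset.card_eq_sum_card_fiberwise (f := φ) (t := KL)
      (fun v hv => by
        simp only [hKL_def, Finset.mem_coe, Finset.mem_filter, Finset.mem_univ, true_and] at hv ⊢
        exact hv)]
    apply Finset.sum_congr rfl
    intro k hk
    simp only [hKL_def, Finset.mem_filter, Finset.mem_univ, true_and] at hk
    rw [cnt_apply]
    congr 1
    ext v
    simp only [Finset.mem_filter, Finset.mem_univ, true_and]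
    constructor
    · rintro ⟨-, h⟩; exact h
    · intro h; rw [h]; exact ⟨hk, rfl⟩
  -- cardinality bound
  have htot : FRset.card + La.card ≤ Fintype.card V := by
    have h1 : FRset.card ≤ Kn.card := Finset.card_image_le
    have h2 : Kn.card ≤ (Finset.univ.filter (fun v => ¬ Lp G (φa v))).card := by
      rw [Finset.card_eq_sum_card_fiberwise (f := φa) (t := Kn)
        (fun v hv => by
          simp only [Finset.mem_coe, Finset.mem_filter, Finset.mem_univ, true_and] at hv
          simp only [hKn_def, Finset.mem_coe, Finset.mem_filter, Finset.mem_univ, true_and]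
          exact ⟨hfiber' φa v, hv⟩)]
      have : ∀ k ∈ Kn, 1 ≤ ((Finset.univ.filter (fun v => ¬ Lp G (φa v))).filter
          (fun v => φa v = k)).card := by
        intro k hk
        simp only [hKn_def, Finset.mem_filter, Finset.mem_univ, true_and] at hk
        obtain ⟨v, hv⟩ := hfiber φa k hk.1
        refine Nat.one_le_iff_ne_zero.2 (Finset.card_ne_zero.2 ⟨v, ?_⟩)
        simp only [Finset.mem_filter, Finset.mem_univ, true_and]
        exact ⟨by rw [hv]; exact hk.2, hv⟩
      calc Kn.card = ∑ _k ∈ Kn, 1 := by simp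
        _ ≤ _ := Finset.sum_le_sum this
    have h3 : (Finset.univ.filter (fun v => Lp G (φa v))).card
        + (Finset.univ.filter (fun v => ¬ Lp G (φa v))).card = Fintype.card V := by
      rw [Finset.card_filter_add_card_filter_not]
      exact Finset.card_univ
    rw [← hLa_def] at h3
    omega
  -- the colour embedding
  have hq0 : 0 < q := by omega
  set q0 : Fin q := ⟨0, hq0⟩ with hq0_def
  have hcardle : Fintype.card ↥(FRset.disjSum La) ≤ Fintype.card (Fin q) := by
    rw [Fintype.card_coe, Finset.card_disjSum, Fintype.card_fin]
    omega
  obtain ⟨E⟩ := Function.Embedding.nonempty_of_card_le hcardle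
  set cmap : (Fin n ⊕ V) → Fin q :=
    fun x => if h : x ∈ FRset.disjSum La then E ⟨x, h⟩ else q0 with hcmap_def
  set fc : Fin n → Fin q := fun r => cmap (Sum.inl r) with hfc_def
  set bc : V → Fin q := fun v => cmap (Sum.inr v) with hbc_def
  have hfcinj : Set.InjOn fc ↑FRset := by
    intro r1 h1 r2 h2 heq
    rw [Finset.mem_coe] at h1 h2
    rw [hfc_def] at heq
    simp only [hcmap_def, dif_pos (Finset.inl_mem_disjSum.2 h1),
      dif_pos (Finset.inl_mem_disjSum.2 h2)] at heq
    have h' := congrArg Subtype.val (E.injective heq)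
    exact Sum.inl.inj h' 
  have hbcinj : ∀ w1 ∈ La, ∀ w2 ∈ La, bc w1 = bc w2 → w1 = w2 := by
    intro w1 h1 w2 h2 heq
    rw [hbc_def] at heq
    simp only [hcmap_def, dif_pos (Finset.inr_mem_disjSum.2 h1),
      dif_pos (Finset.inr_mem_disjSum.2 h2)] at heq
    have h' := congrArg Subtype.val (E.injective heq)
    exact Sum.inr.inj h' 
  have hfcbc : ∀ r ∈ FRset, ∀ w ∈ La, fc r ≠ bc w := by
    intro r hr w hw heq
    rw [hfc_def, hbc_def] at heq
    simp only [hcmap_def, dif_pos (Finset.inl_mem_disjSum.2 hr),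
      dif_pos (Finset.inr_mem_disjSum.2 hw)] at heq
    have := congrArg Subtype.val (E.injective heq)
    simp at this
  -- the embedding of b-loop vertices into a-loop vertices
  set Ta : Finset V := if Lp G i then La.erase u else La with hTa_def
  have hTa_sub : Ta ⊆ La := by
    rw [hTa_def]
    split_ifs
    · exact Finset.erase_subset _ _
    · exact subset_rfl
  have huLa : Lp G i → u ∈ La := by
    intro h
    simp only [hLa_def, Finset.mem_filter, Finset.mem_univ, true_and, hu]
    exact h
  have hloople : ∀ k ∈ KL, cnt φb k ≤ cnt φa k := by
    intro k hk
    simp only [hKL_def, Finset.mem_filter, Finset.mem_univ, true_and] at hk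
    by_contra h
    exact hC2 k (by omega) hk
  have hLbTa : Lb.card ≤ Ta.card := by
    rw [hTa_def]
    have ha' := hLcard φa
    have hb' := hLcard φb
    split_ifs with hLpi
    · rw [Finset.card_erase_of_mem (huLa hLpi)]
      rw [← hLa_def] at ha'
      rw [← hLb_def] at hb'
      have hstrict : ∑ k ∈ KL, cnt φb k < ∑ k ∈ KL, cnt φa k := by
        refine Finset.sum_lt_sum hloople ⟨i, ?_, hiab⟩
        simp only [hKL_def, Finset.mem_filter, Finset.mem_univ, true_and]
        exact hLpi
      omega
    · rw [← hLa_def] at ha'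
      rw [← hLb_def] at hb'
      have := Finset.sum_le_sum hloople
      omega
  obtain ⟨θ⟩ : Nonempty (↥Lb ↪ ↥Ta) := by
    apply Function.Embedding.nonempty_of_card_le
    rw [Fintype.card_coe, Fintype.card_coe]
    exact hLbTa
  set βb : V → Fin q := fun v => if h : v ∈ Lb then bc ((θ ⟨v, h⟩ : ↥Ta) : V) else q0
    with hβb_def
  have hLbmem : ∀ v, Lp G (φb v) ↔ v ∈ Lb := by
    intro v
    simp [hLb_def]
  have hβbinjset : Set.InjOn βb {v | Lp G (φb v)} := by
    intro v1 h1 v2 h2 heq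
    have h1' : v1 ∈ Lb := (hLbmem v1).1 h1
    have h2' : v2 ∈ Lb := (hLbmem v2).1 h2
    rw [hβb_def] at heq
    simp only [dif_pos h1', dif_pos h2'] at heq
    have hθ1 : ((θ ⟨v1, h1'⟩ : ↥Ta) : V) ∈ La := hTa_sub (θ ⟨v1, h1'⟩).2
    have hθ2 : ((θ ⟨v2, h2'⟩ : ↥Ta) : V) ∈ La := hTa_sub (θ ⟨v2, h2'⟩).2
    have := hbcinj _ hθ1 _ hθ2 heq
    have := θ.injective (Subtype.ext this)
    exact congrArg Subtype.val this
  -- rep facts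
  have hrepa : ∀ v, ¬ Lp G (φa v) → rep G (φa v) ∈ FRset := by
    intro v hv
    refine Finset.mem_image.2 ⟨φa v, ?_, rfl⟩
    simp only [hKn_def, Finset.mem_filter, Finset.mem_univ, true_and]
    exact ⟨hfiber' φa v, hv⟩
  have hrepb : ∀ v, ¬ Lp G (φb v) → rep G (φb v) ∈ FRset := by
    intro v hv
    by_cases hak : cnt φa (φb v) ≠ 0
    · refine Finset.mem_image.2 ⟨φb v, ?_, rfl⟩
      simp only [hKn_def, Finset.mem_filter, Finset.mem_univ, true_and]
      exact ⟨hak, hv⟩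
    · push_neg at hak
      have hlt : cnt φa (φb v) < cnt φb (φb v) := by
        have := hfiber' φb v
        omega
      obtain ⟨k', hk'a, hrelk⟩ := hC3 (φb v) hlt
      have hnLpk' : ¬ Lp G k' := by
        intro hL
        have := loop_rel_eq hG hnn hafm hL (rel_symm hG hrelk)
        rw [← this] at hv
        exact hv hL
      rw [rep_eq_of_rel hG hnn hafm hrelk]
      refine Finset.mem_image.2 ⟨k', ?_, rfl⟩
      simp only [hKn_def, Finset.mem_filter, Finset.mem_univ, true_and]
      exact ⟨hk'a, hnLpk'⟩
  -- disjointness hypotheses for `enc`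
  have hdisja : ∀ r ∈ FRset, ∀ v : V, Lp G (φa v) → fc r ≠ bc v := by
    intro r hr v hv
    refine hfcbc r hr v ?_
    simp only [hLa_def, Finset.mem_filter, Finset.mem_univ, true_and]
    exact hv
  have hdisjb : ∀ r ∈ FRset, ∀ v : V, Lp G (φb v) → fc r ≠ βb v := by
    intro r hr v hv
    have hv' : v ∈ Lb := (hLbmem v).1 hv
    rw [hβb_def]
    simp only [dif_pos hv']
    exact hfcbc r hr _ (hTa_sub (θ ⟨v, hv'⟩).2)
  have hbainjset : Set.InjOn bc {v | Lp G (φa v)} := by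
    intro v1 h1 v2 h2 heq
    refine hbcinj v1 ?_ v2 ?_ heq <;>
      simp only [hLa_def, Finset.mem_filter, Finset.mem_univ, true_and] <;> assumption
  -- the two encodings
  set ψa : V → Fin q := enc G φa fc bc with hψa_def
  set ψb : V → Fin q := enc G φb fc βb with hψb_def
  have hadma : Adm H (adjKq q) ψa :=
    enc_adm hG hnn hafm hφa hAa hfcinj hbainjset hdisja hrepa
  have hadmb : Adm H (adjKq q) ψb :=
    enc_adm hG hnn hafm hφb hAb hfcinj hβbinjset hdisjb hrepb
  have hahmem : cnt ψa ∈ ((chromPoly H (adjKq q) (adjKq_isHermitian q)).support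
      : Set (Fin q →₀ ℕ)) := (hmemK _).2 ⟨ψa, hadma, rfl⟩
  have hbhmem : cnt ψb ∈ ((chromPoly H (adjKq q) (adjKq_isHermitian q)).support
      : Set (Fin q →₀ ℕ)) := (hmemK _).2 ⟨ψb, hadmb, rfl⟩
  -- count evaluations
  have hEa_fc : ∀ r ∈ FRset, cnt ψa (fc r) = ∑ k ∈ KF G r, cnt φa k :=
    fun r hr => enc_cnt_fc hfcinj hAa hdisja hrepa hr
  have hEb_fc : ∀ r ∈ FRset, cnt ψb (fc r) = ∑ k ∈ KF G r, cnt φb k :=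
    fun r hr => enc_cnt_fc hfcinj hAb hdisjb hrepb hr
  have hEa_bc : ∀ w ∈ La, cnt ψa (bc w) = 1 := by
    intro w hw
    rw [hψa_def, enc_cnt_other hrepa (fun r hr => hfcbc r hr w hw)]
    have hset : (Finset.univ.filter (fun v => Lp G (φa v) ∧ bc v = bc w)) = {w} := by
      ext v
      simp only [Finset.mem_filter, Finset.mem_univ, true_and, Finset.mem_singleton]
      constructor
      · rintro ⟨h1, h2⟩
        refine hbcinj v ?_ w hw h2
        simp only [hLa_def, Finset.mem_filter, Finset.mem_univ, true_and]
        exact h1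
      · rintro rfl
        simp only [hLa_def, Finset.mem_filter, Finset.mem_univ, true_and] at hw
        exact ⟨hw, rfl⟩
    rw [hset, Finset.card_singleton]
  have hEb_bc_le : ∀ w ∈ La, cnt ψb (bc w) ≤ 1 := by
    intro w hw
    rw [hψb_def, enc_cnt_other hrepb (fun r hr => hfcbc r hr w hw)]
    refine Finset.card_le_one.2 ?_
    intro v1 hv1 v2 hv2
    simp only [Finset.mem_filter, Finset.mem_univ, true_and] at hv1 hv2
    exact hβbinjset hv1.1 hv2.1 (hv1.2.trans hv2.2.symm)
  have hEb_bcu : Lp G i → cnt ψb (bc u) = 0 := by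
    intro hLpi
    rw [hψb_def, enc_cnt_other hrepb (fun r hr => hfcbc r hr u (huLa hLpi))]
    rw [Finset.card_eq_zero, Finset.filter_eq_empty_iff]
    intro v _
    rintro ⟨h1, h2⟩
    have hv' : v ∈ Lb := (hLbmem v).1 h1
    rw [hβb_def] at h2
    simp only [dif_pos hv'] at h2
    have hθv : ((θ ⟨v, hv'⟩ : ↥Ta) : V) ∈ Ta := (θ ⟨v, hv'⟩).2
    have := hbcinj _ (hTa_sub hθv) u (huLa hLpi) h2
    rw [this, hTa_def, if_pos hLpi] at hθv
    exact (Finset.notMem_erase u La) hθv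
  -- the colour to remove
  set i' : Fin q := if Lp G i then bc u else fc (rep G i) with hi'_def
  have hrepFRi : ¬ Lp G i → rep G i ∈ FRset := by
    intro h
    refine Finset.mem_image.2 ⟨i, ?_, rfl⟩
    simp only [hKn_def, Finset.mem_filter, Finset.mem_univ, true_and]
    exact ⟨by omega, h⟩
  have hii' : cnt ψb i' < cnt ψa i' := by
    rw [hi'_def]
    split_ifs with hLpi
    · rw [hEa_bc u (huLa hLpi), hEb_bcu hLpi]
      omega
    · rw [hEa_fc _ (hrepFRi hLpi), hEb_fc _ (hrepFRi hLpi)]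
      refine Finset.sum_lt_sum ?_ ⟨i, ?_, hiab⟩
      · intro k hk
        simp only [KF, Finset.mem_filter, Finset.mem_univ, true_and] at hk
        by_contra h
        push_neg at h
        have hki : k ≠ i := by
          rintro rfl
          omega
        refine hC1 k h hki ?_
        exact rel_of_rep_eq hG hnn hafm hAi (hk.1) hk.2.2.symm
      · unfold KF
        rw [Finset.mem_filter]
        exact ⟨Finset.mem_univ i, hAi, hLpi, rfl⟩
  -- apply the oracle
  obtain ⟨j', hj'lt, hmemj'⟩ := hKq (cnt ψa) hahmem (cnt ψb) hbhmem i' hii'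
  -- analyse j'
  obtain ⟨v1, hv1⟩ := hfiber ψb j' (by omega)
  by_cases hLv1 : Lp G (φb v1)
  · exfalso
    have hv1' : v1 ∈ Lb := (hLbmem v1).1 hLv1
    have hj'bc : j' = bc ((θ ⟨v1, hv1'⟩ : ↥Ta) : V) := by
      rw [← hv1, hψb_def]
      unfold enc
      rw [if_pos hLv1, hβb_def]
      simp only [dif_pos hv1']
    have hwLa : ((θ ⟨v1, hv1'⟩ : ↥Ta) : V) ∈ La := hTa_sub (θ ⟨v1, hv1'⟩).2
    have h1 := hEa_bc _ hwLa
    have h2 := hEb_bc_le _ hwLa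
    rw [← hj'bc] at h1 h2
    omega
  · set rb : Fin n := rep G (φb v1) with hrb_def
    have hrbFR : rb ∈ FRset := hrepb v1 hLv1
    have hj'fc : j' = fc rb := by
      rw [← hv1, hψb_def]
      unfold enc
      rw [if_neg hLv1]
    have hsumlt : ∑ k ∈ KF G rb, cnt φa k < ∑ k ∈ KF G rb, cnt φb k := by
      have h1 := hEa_fc _ hrbFR
      have h2 := hEb_fc _ hrbFR
      rw [← hj'fc] at h1 h2
      omega
    have hexj : ∃ k ∈ KF G rb, cnt φa k < cnt φb k := by
      by_contra h
      push_neg at h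
      exact absurd (Finset.sum_le_sum (fun k hk => h k hk)) (not_le.2 hsumlt)
    obtain ⟨j, hjKF, hjlt⟩ := hexj
    have hjprops : Act G j ∧ ¬ Lp G j ∧ rep G j = rb := by
      simpa only [KF, Finset.mem_filter, Finset.mem_univ, true_and] using hjKF
    refine ⟨j, hjlt, ?_⟩
    obtain ⟨ψ', hψ'adm, hψ'cnt⟩ := (hmemK _).1 hmemj'
    set A' : Fin n →₀ ℕ := cnt φa - Finsupp.single i 1 + Finsupp.single j 1 with hA'_def
    have hψ'eval : ∀ x, cnt ψ' x
        = cnt ψa x - (if i' = x then 1 else 0) + (if j' = x then 1 else 0) := by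
      intro x
      rw [hψ'cnt]
      rw [Finsupp.add_apply, Finsupp.tsub_apply, Finsupp.single_apply, Finsupp.single_apply]
    have hA'eval : ∀ k, A' k
        = cnt φa k - (if i = k then 1 else 0) + (if j = k then 1 else 0) := by
      intro k
      rw [hA'_def]
      rw [Finsupp.add_apply, Finsupp.tsub_apply, Finsupp.single_apply, Finsupp.single_apply]
    have hjne : j ≠ i := by
      rintro rfl
      omega
    have hEa_other : ∀ x : Fin q, (∀ r ∈ FRset, fc r ≠ x) → (∀ w ∈ La, bc w ≠ x) →
        cnt ψa x = 0 := by
      intro x h1 h2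
      rw [hψa_def, enc_cnt_other hrepa h1, Finset.card_eq_zero, Finset.filter_eq_empty_iff]
      intro v _
      rintro ⟨hv1, hv2⟩
      refine h2 v ?_ hv2
      simp only [hLa_def, Finset.mem_filter, Finset.mem_univ, true_and]
      exact hv1
    -- indicator identities
    have hind_i : ∀ r ∈ FRset, (if i' = fc r then (1:ℕ) else 0)
        = (if i ∈ KF G r then 1 else 0) := by
      intro r hr
      rw [hi'_def]
      by_cases hLpi : Lp G i
      · rw [if_pos hLpi]
        rw [if_neg (fun h => hfcbc r hr u (huLa hLpi) h.symm)]
        rw [if_neg (fun h => by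
          unfold KF at h
          rw [Finset.mem_filter] at h
          exact h.2.2.1 hLpi)]
      · rw [if_neg hLpi]
        by_cases hri : rep G i = r
        · rw [if_pos (by rw [hri]), if_pos (by
            unfold KF
            rw [Finset.mem_filter]
            exact ⟨Finset.mem_univ i, hAi, hLpi, hri⟩)]
        · rw [if_neg (fun h => hri (hfcinj (hrepFRi hLpi) hr h)),
            if_neg (fun h => by
              unfold KF at h
              rw [Finset.mem_filter] at h
              exact hri h.2.2.2)]
    have hind_j : ∀ r ∈ FRset, (if j' = fc r then (1:ℕ) else 0)
        = (if j ∈ KF G r then 1 else 0) := by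
      intro r hr
      rw [hj'fc]
      by_cases hrbr : rb = r
      · rw [if_pos (by rw [hrbr]), if_pos (by
          unfold KF
          rw [Finset.mem_filter]
          exact ⟨Finset.mem_univ j, hjprops.1, hjprops.2.1, hjprops.2.2.trans hrbr⟩)]
      · rw [if_neg (fun h => hrbr (hfcinj hrbFR hr h)),
          if_neg (fun h => by
            unfold KF at h
            rw [Finset.mem_filter] at h
            exact hrbr ((hjprops.2.2.symm.trans h.2.2.2)))]
    -- distribution functions on free fibres
    have hdfex : ∀ r : Fin n, ∃ f : V → Fin n, r ∈ FRset →
        ∀ k, ((Finset.univ.filter (fun v => ψ' v = fc r)).filter (fun v => f v = k)).card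
          = (if k ∈ KF G r then A' k else 0) := by
      intro r
      by_cases hr : r ∈ FRset
      · have hsum : ∑ k, (if k ∈ KF G r then A' k else 0)
            = (Finset.univ.filter (fun v => ψ' v = fc r)).card := by
          have h1 : ∑ k, (if k ∈ KF G r then A' k else 0) = ∑ k ∈ KF G r, A' k := by
            rw [Finset.sum_ite_mem, Finset.univ_inter]
          have h2 : ∑ k ∈ KF G r, A' k
              = ∑ k ∈ KF G r, cnt φa k - (if i ∈ KF G r then 1 else 0)
                + (if j ∈ KF G r then 1 else 0) := by
            rw [hA'_def]
            exact sum_exchanged (cnt φa) i j (fun h => hjne h.symm) (by omega) (KF G r)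
          have h3 : (Finset.univ.filter (fun v => ψ' v = fc r)).card = cnt ψ' (fc r) := by
            rw [cnt_apply]
          rw [h1, h2, h3, hψ'eval (fc r), hEa_fc r hr, hind_i r hr, hind_j r hr]
        obtain ⟨f, hf⟩ := exists_fiber_function i _ _ hsum
        exact ⟨f, fun _ => hf⟩
      · exact ⟨fun _ => i, fun hmem => absurd hmem hr⟩
    choose dfun hdfun using hdfex
    -- the decoding maps
    set lv : Fin q → Fin n := fun x =>
      if h : ∃ w, w ∈ La ∧ bc w = x then φa h.choose else i with hlv_def
    set rOf : Fin q → Fin n := fun x =>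
      if h : ∃ r, r ∈ FRset ∧ fc r = x then h.choose else i with hrOf_def
    set φ' : V → Fin n := fun v =>
      if ∃ w, w ∈ La ∧ bc w = ψ' v then lv (ψ' v) else dfun (rOf (ψ' v)) v with hφ'_def
    have hlv_bc : ∀ w ∈ La, lv (bc w) = φa w := by
      intro w hw
      have hex : ∃ w', w' ∈ La ∧ bc w' = bc w := ⟨w, hw, rfl⟩
      have h1 : lv (bc w) = φa hex.choose := by
        rw [hlv_def]; exact dif_pos hex
      rw [h1]
      exact congrArg φa (hbcinj _ hex.choose_spec.1 w hw hex.choose_spec.2)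
    have hrOf_fc : ∀ r ∈ FRset, rOf (fc r) = r := by
      intro r hr
      have hex : ∃ r', r' ∈ FRset ∧ fc r' = fc r := ⟨r, hr, rfl⟩
      have h1 : rOf (fc r) = hex.choose := by
        rw [hrOf_def]; exact dif_pos hex
      rw [h1]
      exact hfcinj hex.choose_spec.1 hr hex.choose_spec.2
    have hφ'block : ∀ v, ∀ w ∈ La, ψ' v = bc w → φ' v = φa w := by
      intro v w hw hvw
      have h1 : φ' v = if ∃ w, w ∈ La ∧ bc w = ψ' v then lv (ψ' v)
          else dfun (rOf (ψ' v)) v := rfl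
      rw [h1, if_pos ⟨w, hw, hvw.symm⟩, hvw, hlv_bc w hw]
    have hφ'free : ∀ v, ∀ r ∈ FRset, ψ' v = fc r → φ' v = dfun r v ∧ dfun r v ∈ KF G r := by
      intro v r hr hvr
      have hnb : ¬ ∃ w, w ∈ La ∧ bc w = ψ' v := by
        rintro ⟨w, hw, hbw⟩
        exact hfcbc r hr w hw (hvr ▸ hbw).symm
      have h1 : φ' v = dfun r v := by
        have h2 : φ' v = if ∃ w, w ∈ La ∧ bc w = ψ' v then lv (ψ' v)
            else dfun (rOf (ψ' v)) v := rfl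
        rw [h2, if_neg hnb, hvr, hrOf_fc r hr]
      refine ⟨h1, ?_⟩
      by_contra hk
      have h0 := hdfun r hr (dfun r v)
      rw [if_neg hk, Finset.card_eq_zero, Finset.filter_eq_empty_iff] at h0
      exact h0 (Finset.mem_filter.2 ⟨Finset.mem_univ v, hvr⟩) rfl
    have hφ'cases : ∀ v, (∃ w ∈ La, ψ' v = bc w) ∨ (∃ r ∈ FRset, ψ' v = fc r) := by
      intro v
      by_contra h
      push_neg at h
      obtain ⟨h1, h2⟩ := h
      have hne0 : cnt ψ' (ψ' v) ≠ 0 := hfiber' ψ' v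
      have h0 : cnt ψa (ψ' v) = 0 := by
        refine hEa_other (ψ' v) ?_ ?_
        · intro r hr heq
          exact h2 r hr heq.symm
        · intro w hw heq
          exact h1 w hw heq.symm
      have hj'0 : (if j' = ψ' v then (1:ℕ) else 0) = 0 := by
        rw [if_neg]
        intro heq
        exact h2 rb hrbFR (heq.symm.trans hj'fc)
      rw [hψ'eval (ψ' v), h0, hj'0] at hne0
      omega
    -- admissibility of the decoded colouring
    have hadm' : Adm H G φ' := by
      intro x y hxy
      have hne : ψ' x ≠ ψ' y := by
        have := hψ'adm x y hxy
        rwa [adjKq_ne_zero] at this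
      have hLpw : ∀ w ∈ La, Lp G (φa w) := by
        intro w hw
        simp only [hLa_def, Finset.mem_filter, Finset.mem_univ, true_and] at hw
        exact hw
      have hKFact : ∀ (r : Fin n) (k : Fin n), k ∈ KF G r → Act G k ∧ ¬ Lp G k ∧ rep G k = r := by
        intro r k hk
        unfold KF at hk
        rw [Finset.mem_filter] at hk
        exact hk.2
      rcases hφ'cases x with ⟨w1, hw1, hx1⟩ | ⟨r1, hr1, hx1⟩ <;>
        rcases hφ'cases y with ⟨w2, hw2, hy2⟩ | ⟨r2, hr2, hy2⟩
      · rw [hφ'block x w1 hw1 hx1, hφ'block y w2 hw2 hy2]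
        exact loop_adj hG hnn hafm (hLpw w1 hw1) (hAa w2)
      · rw [hφ'block x w1 hw1 hx1, (hφ'free y r2 hr2 hy2).1]
        exact loop_adj hG hnn hafm (hLpw w1 hw1) (hKFact r2 _ (hφ'free y r2 hr2 hy2).2).1
      · rw [(hφ'free x r1 hr1 hx1).1, hφ'block y w2 hw2 hy2]
        rw [hsym hG]
        exact loop_adj hG hnn hafm (hLpw w2 hw2) (hKFact r1 _ (hφ'free x r1 hr1 hx1).2).1
      · rw [(hφ'free x r1 hr1 hx1).1, (hφ'free y r2 hr2 hy2).1]
        have hk1 := hKFact r1 _ (hφ'free x r1 hr1 hx1).2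
        have hk2 := hKFact r2 _ (hφ'free y r2 hr2 hy2).2
        have hr12 : r1 ≠ r2 := by
          rintro rfl
          exact hne (hx1.trans hy2.symm)
        refine adj_of_rep_ne hG hnn hafm hk1.1 hk2.1 ?_
        rw [hk1.2.2, hk2.2.2]
        exact hr12
    -- counting the decoded colouring : fibre decomposition over colours
    have hdecomp : ∀ k, cnt φ' k = ∑ x : Fin q,
        (Finset.univ.filter (fun v => φ' v = k ∧ ψ' v = x)).card := by
      intro k
      rw [cnt_apply, Finset.card_eq_sum_card_fiberwise (f := ψ') (t := Finset.univ)
        (fun v _ => Finset.mem_univ _)]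
      apply Finset.sum_congr rfl
      intro x _
      rw [Finset.filter_filter]
    have hPblock : ∀ k, ∀ w ∈ La, (Finset.univ.filter (fun v => φ' v = k ∧ ψ' v = bc w)).card
        = if φa w = k then cnt ψ' (bc w) else 0 := by
      intro k w hw
      by_cases hak : φa w = k
      · rw [if_pos hak, cnt_apply]
        congr 1
        ext v
        simp only [Finset.mem_filter, Finset.mem_univ, true_and]
        constructor
        · rintro ⟨-, h2⟩; exact h2
        · intro h2; exact ⟨by rw [hφ'block v w hw h2, hak], h2⟩
      · rw [if_neg hak, Finset.card_eq_zero, Finset.filter_eq_empty_iff]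
        intro v _
        rintro ⟨h1, h2⟩
        exact hak (by rw [← hφ'block v w hw h2, h1])
    have hPfc : ∀ k, ∀ r ∈ FRset, (Finset.univ.filter (fun v => φ' v = k ∧ ψ' v = fc r)).card
        = if k ∈ KF G r then A' k else 0 := by
      intro k r hr
      rw [← hdfun r hr k, Finset.filter_filter]
      congr 1
      ext v
      simp only [Finset.mem_filter, Finset.mem_univ, true_and]
      constructor
      · rintro ⟨h1, h2⟩
        exact ⟨h2, by rw [← (hφ'free v r hr h2).1, h1]⟩
      · rintro ⟨h2, h1⟩
        exact ⟨by rw [(hφ'free v r hr h2).1, h1], h2⟩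
    have hPother : ∀ k x, (∀ w ∈ La, bc w ≠ x) → (∀ r ∈ FRset, fc r ≠ x) →
        (Finset.univ.filter (fun v => φ' v = k ∧ ψ' v = x)).card = 0 := by
      intro k x h1 h2
      rw [Finset.card_eq_zero, Finset.filter_eq_empty_iff]
      intro v _
      rintro ⟨-, hv2⟩
      rcases hφ'cases v with ⟨w, hw, hvw⟩ | ⟨r, hr, hvr⟩
      · exact h1 w hw (hvw ▸ hv2)
      · exact h2 r hr (hvr ▸ hv2)
    -- evaluation of cnt ψ' at block colours
    have hcnt'bc : ∀ w ∈ La, cnt ψ' (bc w)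
        = 1 - (if Lp G i ∧ w = u then 1 else 0) := by
      intro w hw
      rw [hψ'eval (bc w), hEa_bc w hw]
      have hj'0 : (if j' = bc w then (1:ℕ) else 0) = 0 :=
        if_neg (fun h => hfcbc rb hrbFR w hw (hj'fc ▸ h))
      rw [hj'0, add_zero]
      congr 1
      by_cases hLpi : Lp G i
      · rw [hi'_def, if_pos hLpi]
        by_cases hwu : w = u
        · subst hwu; rw [if_pos rfl, if_pos ⟨hLpi, rfl⟩]
        · rw [if_neg (fun h => hwu (hbcinj u (huLa hLpi) w hw h).symm),
            if_neg (fun hc => hwu hc.2)]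
      · rw [hi'_def, if_neg hLpi]
        rw [if_neg (fun h => hfcbc _ (hrepFRi hLpi) w hw h),
          if_neg (fun hc => hLpi hc.1)]
    -- the loop-fibre cards
    have hLaf : ∀ k' : Fin n, (La.filter (fun w => φa w = k')).card
        = if Lp G k' then cnt φa k' else 0 := by
      intro k'
      by_cases hLk : Lp G k'
      · rw [if_pos hLk, cnt_apply]
        congr 1
        ext w
        simp only [hLa_def, Finset.mem_filter, Finset.mem_univ, true_and]
        constructor
        · rintro ⟨-, h⟩; exact h
        · intro h; exact ⟨by rw [h]; exact hLk, h⟩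
      · rw [if_neg hLk, Finset.card_eq_zero, Finset.filter_eq_empty_iff]
        intro w hw h
        simp only [hLa_def, Finset.mem_filter, Finset.mem_univ, true_and] at hw
        rw [h] at hw
        exact hLk hw
    -- the block part of the sum
    have hblocksum : ∀ k, (∑ w ∈ La, if φa w = k then cnt ψ' (bc w) else 0)
        = (if Lp G k then cnt φa k else 0) - (if k = i ∧ Lp G i then 1 else 0) := by
      intro k
      by_cases hLpi : Lp G i
      · have huLa' := huLa hLpi
        rw [← Finset.add_sum_erase _ _ huLa']
        have hcu : cnt ψ' (bc u) = 0 := by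
          rw [hcnt'bc u huLa']
          have : (if Lp G i ∧ u = u then (1:ℕ) else 0) = 1 := if_pos ⟨hLpi, rfl⟩
          omega
        have hu0 : (if φa u = k then cnt ψ' (bc u) else 0) = 0 := by
          rw [hcu]
          split_ifs <;> rfl
        rw [hu0, zero_add]
        have hrest : ∀ w ∈ La.erase u, (if φa w = k then cnt ψ' (bc w) else 0)
            = (if φa w = k then 1 else 0) := by
          intro w hw
          have hcw : cnt ψ' (bc w) = 1 := by
            rw [hcnt'bc w (Finset.mem_of_mem_erase hw)]
            have : (if Lp G i ∧ w = u then (1:ℕ) else 0) = 0 :=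
              if_neg (fun hc => (Finset.ne_of_mem_erase hw) hc.2)
            omega
          rw [hcw]
        rw [Finset.sum_congr rfl hrest, ← Finset.card_filter]
        have hferase : (La.erase u).filter (fun w => φa w = k)
            = (La.filter (fun w => φa w = k)).erase u := by
          ext w
          simp only [Finset.mem_filter, Finset.mem_erase]
          tauto
        rw [hferase]
        by_cases hk : k = i
        · subst hk
          have e1 : (if Lp G k then cnt φa k else 0) = cnt φa k := if_pos hLpi
          have e2 : (if k = k ∧ Lp G k then (1:ℕ) else 0) = 1 := if_pos ⟨rfl, hLpi⟩
          rw [e1, e2]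
          have hmemu : u ∈ La.filter (fun w => φa w = k) :=
            Finset.mem_filter.2 ⟨huLa', hu⟩
          rw [Finset.card_erase_of_mem hmemu, hLaf k, e1]
        · have e2 : (if k = i ∧ Lp G i then (1:ℕ) else 0) = 0 := if_neg (fun hc => hk hc.1)
          rw [e2, Nat.sub_zero]
          rw [Finset.erase_eq_of_notMem (fun hmem => hk (by
            have := (Finset.mem_filter.1 hmem).2
            rw [← this, hu]))]
          exact hLaf k
      · have hrest : ∀ w ∈ La, (if φa w = k then cnt ψ' (bc w) else 0)
            = (if φa w = k then 1 else 0) := by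
          intro w hw
          have hcw : cnt ψ' (bc w) = 1 := by
            rw [hcnt'bc w hw]
            have : (if Lp G i ∧ w = u then (1:ℕ) else 0) = 0 :=
              if_neg (fun hc => hLpi hc.1)
            omega
          rw [hcw]
        have e2 : (if k = i ∧ Lp G i then (1:ℕ) else 0) = 0 := if_neg (fun hc => hLpi hc.2)
        rw [Finset.sum_congr rfl hrest, ← Finset.card_filter, e2, Nat.sub_zero]
        exact hLaf k
    -- the free part of the sum
    have hfreesum : ∀ k, (∑ r ∈ FRset, if k ∈ KF G r then A' k else 0)
        = if Act G k ∧ ¬ Lp G k ∧ rep G k ∈ FRset then A' k else 0 := by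
      intro k
      have hterm : ∀ r ∈ FRset, (if k ∈ KF G r then A' k else 0)
          = if (Act G k ∧ ¬ Lp G k) ∧ rep G k = r then A' k else 0 := by
        intro r _
        by_cases h : k ∈ KF G r
        · have h' : Act G k ∧ ¬ Lp G k ∧ rep G k = r := by
            unfold KF at h
            rw [Finset.mem_filter] at h
            exact h.2
          rw [if_pos h, if_pos ⟨⟨h'.1, h'.2.1⟩, h'.2.2⟩]
        · rw [if_neg h, if_neg (fun hc => h (by
            unfold KF
            rw [Finset.mem_filter]
            exact ⟨Finset.mem_univ k, hc.1.1, hc.1.2, hc.2⟩))]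
      rw [Finset.sum_congr rfl hterm]
      by_cases hP : Act G k ∧ ¬ Lp G k
      · have hsimp : ∀ r ∈ FRset, (if (Act G k ∧ ¬ Lp G k) ∧ rep G k = r then A' k else 0)
            = if rep G k = r then A' k else 0 := by
          intro r _
          by_cases h : rep G k = r
          · rw [if_pos ⟨hP, h⟩, if_pos h]
          · rw [if_neg (fun hc => h hc.2), if_neg h]
        rw [Finset.sum_congr rfl hsimp]
        rw [Finset.sum_ite_eq FRset (rep G k) (fun _ => A' k)]
        by_cases hmem2 : rep G k ∈ FRset
        · rw [if_pos hmem2, if_pos ⟨hP.1, hP.2, hmem2⟩]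
        · rw [if_neg hmem2, if_neg (fun hc => hmem2 hc.2.2)]
      · rw [Finset.sum_eq_zero (fun r _ => if_neg (fun hc => hP hc.1)),
          if_neg (fun hc => hP ⟨hc.1, hc.2.1⟩)]
    -- assembling
    have hcntk : ∀ k, cnt φ' k
        = ((if Lp G k then cnt φa k else 0) - (if k = i ∧ Lp G i then 1 else 0))
          + (if Act G k ∧ ¬ Lp G k ∧ rep G k ∈ FRset then A' k else 0) := by
      intro k
      rw [hdecomp k]
      have hz : ∀ x ∈ Finset.univ, x ∉ (La.image bc ∪ FRset.image fc) →
          (Finset.univ.filter (fun v => φ' v = k ∧ ψ' v = x)).card = 0 := by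
        intro x _ hx
        rw [Finset.mem_union] at hx
        push_neg at hx
        refine hPother k x ?_ ?_
        · intro w hw heq; exact hx.1 (Finset.mem_image.2 ⟨w, hw, heq⟩)
        · intro r hr heq; exact hx.2 (Finset.mem_image.2 ⟨r, hr, heq⟩)
      rw [← Finset.sum_subset (Finset.subset_univ _) hz]
      have hdisj2 : Disjoint (La.image bc) (FRset.image fc) := by
        rw [Finset.disjoint_left]
        intro x hx1 hx2
        obtain ⟨w, hw, rfl⟩ := Finset.mem_image.1 hx1
        obtain ⟨r, hr, heq⟩ := Finset.mem_image.1 hx2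
        exact hfcbc r hr w hw heq
      rw [Finset.sum_union hdisj2]
      have hsum1 : (∑ x ∈ La.image bc,
            (Finset.univ.filter (fun v => φ' v = k ∧ ψ' v = x)).card)
          = ∑ w ∈ La, if φa w = k then cnt ψ' (bc w) else 0 := by
        rw [Finset.sum_image (fun w hw w' hw' h => hbcinj w hw w' hw' h)]
        exact Finset.sum_congr rfl (fun w hw => hPblock k w hw)
      have hsum2 : (∑ x ∈ FRset.image fc,
            (Finset.univ.filter (fun v => φ' v = k ∧ ψ' v = x)).card)
          = ∑ r ∈ FRset, if k ∈ KF G r then A' k else 0 := by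
        rw [Finset.sum_image (fun r hr r' hr' h => hfcinj hr hr' h)]
        exact Finset.sum_congr rfl (fun r hr => hPfc k r hr)
      rw [hsum1, hsum2, hblocksum k, hfreesum k]
    -- final identification
    have hfinal : cnt φ' = A' := by
      apply Finsupp.ext
      intro k
      rw [hcntk k]
      by_cases h1 : Lp G k
      · have hkj : k ≠ j := fun h => hjprops.2.1 (h ▸ h1)
        rw [if_neg (fun hc : Act G k ∧ ¬ Lp G k ∧ rep G k ∈ FRset => hc.2.1 h1),
          if_pos h1, add_zero, hA'eval k]
        by_cases h2 : k = i
        · rw [if_pos ⟨h2, h2 ▸ h1⟩, if_pos h2.symm, if_neg (fun h : j = k => hkj h.symm)]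
          omega
        · rw [if_neg (fun hc => h2 hc.1), if_neg (fun h : i = k => h2 h.symm),
            if_neg (fun h : j = k => hkj h.symm)]
          omega
      · rw [if_neg h1, if_neg (fun hc : k = i ∧ Lp G i => h1 (by rw [hc.1]; exact hc.2))]
        by_cases h2 : Act G k ∧ rep G k ∈ FRset
        · rw [if_pos ⟨h2.1, h1, h2.2⟩]
          omega
        · rw [if_neg (fun hc => h2 ⟨hc.1, hc.2.2⟩)]
          have hca0 : cnt φa k = 0 := by
            by_contra h
            refine h2 ⟨hActa k h, Finset.mem_image.2 ⟨k, ?_, rfl⟩⟩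
            simp only [hKn_def, Finset.mem_filter, Finset.mem_univ, true_and]
            exact ⟨h, h1⟩
          have hki : k ≠ i := by
            rintro rfl
            omega
          have hkj : k ≠ j := by
            rintro rfl
            exact h2 ⟨hjprops.1, hjprops.2.2 ▸ hrbFR⟩
          rw [hA'eval k, hca0, if_neg (fun h : i = k => hki h.symm),
            if_neg (fun h : j = k => hkj h.symm)]
    exact (hmem A').2 ⟨φ', hadm', hfinal⟩
end

section
/- Let G be a finite simple graph, let F be a bipartite graph, and let 𝓗 be the class of all graphs that are cross-bipartite swapping in G. Then every 𝓗-blow-up H of F is bipartite swapping in G, i.e. hom(H, G)² ≤ hom(H × K_2, G). -/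
open SimpleGraph

/-- The tensor product `H × K₂`. -/
def tensorK2 {V : Type} (H : SimpleGraph V) : SimpleGraph (V × Fin 2) where
  Adj x y := H.Adj x.1 y.1 ∧ x.2 ≠ y.2
  symm := ⟨fun _ _ h => ⟨h.1.symm, h.2.symm⟩⟩
  loopless := ⟨fun _ h => h.2 rfl⟩

/-- The number of graph homomorphisms from `H` to `G`. -/
noncomputable def homCount {V W : Type} (H : SimpleGraph V) (G : SimpleGraph W) : ℕ :=
  Nat.card (H →g G)

/-- `hom_b(H × K₂, G[A,B])`: the number of homomorphisms from `H × K₂` to `G` mapping the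
side `V(H) × {1}` into `A` and the side `V(H) × {2}` into `B`. -/
noncomputable def homB {V W : Type} (H : SimpleGraph V) (G : SimpleGraph W)
    (A B : Set W) : ℕ :=
  Nat.card {f : tensorK2 H →g G // (∀ v : V, f (v, 0) ∈ A) ∧ (∀ v : V, f (v, 1) ∈ B)}

/-- `H` is cross-bipartite swapping in `G`:
`hom(H,G[A]) ⬝ hom(H,G[B]) ≤ hom_b(H × K₂, G[A,B])` for all `A, B ⊆ V(G)`. -/
def CrossBipartiteSwapping {V W : Type} (H : SimpleGraph V) (G : SimpleGraph W) : Prop :=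
  ∀ A B : Set W,
    homCount H (G.induce A) * homCount H (G.induce B) ≤ homB H G A B

/-- `H` is a blow-up of `F` by graphs of the class described by `P`. -/
def IsBlowUpOf {V ι : Type} (H : SimpleGraph V) (F : SimpleGraph ι)
    (P : (α : Type) → SimpleGraph α → Prop) : Prop :=
  ∃ p : V → ι, Function.Surjective p ∧
    (∀ u v : V, p u ≠ p v → (H.Adj u v ↔ F.Adj (p u) (p v))) ∧
    ∀ i : ι, P (p ⁻¹' {i}) (H.induce (p ⁻¹' {i}))

def Cond {V ι W : Type} (H : SimpleGraph V) (G : SimpleGraph W) (p : V → ι) (S : Finset ι)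
    (f : (V → W) × (V → W)) : Prop :=
  ∀ u v : V, H.Adj u v →
    (p u ≠ p v → G.Adj (f.1 u) (f.1 v) ∧ G.Adj (f.2 u) (f.2 v)) ∧
    (p u = p v → (p u ∈ S → G.Adj (f.1 u) (f.2 v)) ∧
      (p u ∉ S → G.Adj (f.1 u) (f.1 v) ∧ G.Adj (f.2 u) (f.2 v)))

lemma fin2_cases {a b : Fin 2} (h : a ≠ b) : (a = 0 ∧ b = 1) ∨ (a = 1 ∧ b = 0) := by
  revert h; revert a b; decide

lemma fin2_one {a : Fin 2} (h : a ≠ 0) : a = 1 := by revert h; revert a; decide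

lemma fin2_or (j : Fin 2) : j = 0 ∨ j = 1 := by revert j; decide

lemma tensor_adj {V : Type} (H : SimpleGraph V) {u v : V} (h : H.Adj u v)
    (a b : Fin 2) (hab : a ≠ b) : (tensorK2 H).Adj (u, a) (v, b) := ⟨h, hab⟩

@[simp] lemma relHom_mk_apply {α β : Type} {r : α → α → Prop} {s : β → β → Prop}
    (f : α → β) (h : ∀ {a b}, r a b → s (f a) (f b)) (a : α) :
    (⟨f, h⟩ : r →r s) a = f a := rfl

section TensorEq

variable {V ι W : Type} {H : SimpleGraph V} {F : SimpleGraph ι} {G : SimpleGraph W}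
  {p : V → ι} {C : F.Coloring (Fin 2)}

def tPair (p : V → ι) (C : F.Coloring (Fin 2)) (χ : tensorK2 H →g G) : (V → W) × (V → W) :=
  (fun v => if C (p v) = 0 then χ (v, 0) else χ (v, 1),
   fun v => if C (p v) = 0 then χ (v, 1) else χ (v, 0))

lemma tPair_cond [Fintype ι] (hadj : ∀ u v : V, p u ≠ p v → (H.Adj u v ↔ F.Adj (p u) (p v)))
    (χ : tensorK2 H →g G) :
    Cond H G p Finset.univ (tPair p C χ) := by
  intro u v h
  unfold tPair
  constructor
  · intro hne
    have hc : C (p u) ≠ C (p v) := C.valid ((hadj u v hne).mp h)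
    by_cases h0 : C (p u) = 0
    · have h1 : C (p v) = 1 := fin2_one fun hh => hc (h0.trans hh.symm)
      simp only [h0, h1]
      norm_num
      exact ⟨χ.map_adj (tensor_adj H h _ _ (by decide)),
        χ.map_adj (tensor_adj H h _ _ (by decide))⟩
    · have h1 : C (p u) = 1 := fin2_one h0
      have h2 : C (p v) = 0 := by
        rcases fin2_or (C (p v)) with hh | hh
        · exact hh
        · exact absurd (h1.trans hh.symm) hc
      simp only [h1, h2]
      norm_num
      exact ⟨χ.map_adj (tensor_adj H h _ _ (by decide)),
        χ.map_adj (tensor_adj H h _ _ (by decide))⟩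
  · intro hpe
    refine ⟨fun _ => ?_, fun hn => absurd (Finset.mem_univ _) hn⟩
    have h0' : C (p v) = C (p u) := by rw [hpe]
    by_cases h0 : C (p u) = 0
    · simp only [h0, h0'.trans h0]
      norm_num
      exact χ.map_adj (tensor_adj H h _ _ (by decide))
    · simp only [if_neg h0, if_neg (h0' ▸ h0 : ¬C (p v) = 0)]
      exact χ.map_adj (tensor_adj H h _ _ (by decide))

def tFun (p : V → ι) (C : F.Coloring (Fin 2)) (y : (V → W) × (V → W)) : V × Fin 2 → W := fun x =>
  if C (p x.1) = 0 then (if x.2 = 0 then y.1 x.1 else y.2 x.1)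
  else (if x.2 = 0 then y.2 x.1 else y.1 x.1)

lemma tFun_rel [Fintype ι] (hadj : ∀ u v : V, p u ≠ p v → (H.Adj u v ↔ F.Adj (p u) (p v)))
    {y : (V → W) × (V → W)} (hy : Cond H G p Finset.univ y)
    {a b : V × Fin 2} (hab : (tensorK2 H).Adj a b) :
    G.Adj (tFun p C y a) (tFun p C y b) := by
  obtain ⟨h, hj⟩ := hab
  unfold tFun
  rcases fin2_cases hj with ⟨ha, hb⟩ | ⟨ha, hb⟩ <;>
    by_cases hpe : p a.1 = p b.1
  · have h0' : C (p b.1) = C (p a.1) := by rw [hpe]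
    by_cases h0 : C (p a.1) = 0
    · simp only [ha, hb, h0, h0'.trans h0]
      norm_num
      exact ((hy a.1 b.1 h).2 hpe).1 (Finset.mem_univ _)
    · simp only [ha, hb, if_neg h0, if_neg (h0' ▸ h0 : ¬C (p b.1) = 0)]
      norm_num
      exact (((hy b.1 a.1 h.symm).2 hpe.symm).1 (Finset.mem_univ _)).symm
  · have hc : C (p a.1) ≠ C (p b.1) := C.valid ((hadj _ _ hpe).mp h)
    by_cases h0 : C (p a.1) = 0
    · have h1 : C (p b.1) = 1 := fin2_one fun hh => hc (h0.trans hh.symm)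
      simp only [ha, hb, h0, h1]
      norm_num
      exact ((hy a.1 b.1 h).1 hpe).1
    · have h1 : C (p a.1) = 1 := fin2_one h0
      have h2 : C (p b.1) = 0 := by
        rcases fin2_or (C (p b.1)) with hh | hh
        · exact hh
        · exact absurd (h1.trans hh.symm) hc
      simp only [ha, hb, if_neg h0, h2]
      norm_num
      exact ((hy a.1 b.1 h).1 hpe).2
  · have h0' : C (p b.1) = C (p a.1) := by rw [hpe]
    by_cases h0 : C (p a.1) = 0
    · simp only [ha, hb, h0, h0'.trans h0]
      norm_num
      exact (((hy b.1 a.1 h.symm).2 hpe.symm).1 (Finset.mem_univ _)).symm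
    · simp only [ha, hb, if_neg h0, if_neg (h0' ▸ h0 : ¬C (p b.1) = 0)]
      norm_num
      exact ((hy a.1 b.1 h).2 hpe).1 (Finset.mem_univ _)
  · have hc : C (p a.1) ≠ C (p b.1) := C.valid ((hadj _ _ hpe).mp h)
    by_cases h0 : C (p a.1) = 0
    · have h1 : C (p b.1) = 1 := fin2_one fun hh => hc (h0.trans hh.symm)
      simp only [ha, hb, h0, h1]
      norm_num
      exact ((hy a.1 b.1 h).1 hpe).2
    · have h1 : C (p a.1) = 1 := fin2_one h0
      have h2 : C (p b.1) = 0 := by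
        rcases fin2_or (C (p b.1)) with hh | hh
        · exact hh
        · exact absurd (h1.trans hh.symm) hc
      simp only [ha, hb, if_neg h0, h2]
      norm_num
      exact ((hy a.1 b.1 h).1 hpe).1

def tHom [Fintype ι] (hadj : ∀ u v : V, p u ≠ p v → (H.Adj u v ↔ F.Adj (p u) (p v)))
    (y : {f : (V → W) × (V → W) // Cond H G p Finset.univ f}) :
    tensorK2 H →g G :=
  ⟨tFun p C y.1, fun hab => tFun_rel hadj y.2 hab⟩

@[simp] lemma tHom_apply {V ι W : Type} {H : SimpleGraph V} {F : SimpleGraph ι}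
    {G : SimpleGraph W} {p : V → ι} {C : F.Coloring (Fin 2)} [Fintype ι]
    (hadj : ∀ u v : V, p u ≠ p v → (H.Adj u v ↔ F.Adj (p u) (p v)))
    (y : {f : (V → W) × (V → W) // Cond H G p Finset.univ f}) (x : V × Fin 2) :
    tHom (C := C) hadj y x = tFun p C y.1 x := rfl

lemma hom_tensor_eq [Fintype ι] (H : SimpleGraph V) (F : SimpleGraph ι) (G : SimpleGraph W)
    (p : V → ι) (C : F.Coloring (Fin 2))
    (hadj : ∀ u v : V, p u ≠ p v → (H.Adj u v ↔ F.Adj (p u) (p v))) :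
    homCount (tensorK2 H) G
      = Nat.card {f : (V → W) × (V → W) // Cond H G p Finset.univ f} := by
  rw [homCount]
  apply Nat.card_congr
  refine
    { toFun := fun χ => ⟨tPair p C χ, tPair_cond hadj χ⟩
      invFun := tHom (C := C) hadj
      left_inv := fun χ => ?_
      right_inv := fun y => ?_ }
  · ext ⟨v, j⟩
    show tFun p C (tPair p C χ) (v, j) = χ (v, j)
    unfold tFun tPair
    rcases fin2_or j with hj | hj <;> subst hj <;>
      by_cases h0 : C (p v) = 0 <;> simp [h0]
  · refine Subtype.ext (Prod.ext (funext fun v => ?_) (funext fun v => ?_))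
    · show (tPair p C (tHom (C := C) hadj y)).1 v = y.1.1 v
      simp only [tPair, tHom_apply]
      unfold tFun
      by_cases h0 : C (p v) = 0 <;> simp [h0]
    · show (tPair p C (tHom (C := C) hadj y)).2 v = y.1.2 v
      simp only [tPair, tHom_apply]
      unfold tFun
      by_cases h0 : C (p v) = 0 <;> simp [h0]

end TensorEq

section Step

variable {V ι W : Type}

def setA (F : SimpleGraph ι) (G : SimpleGraph W) (p : V → ι) (i : ι)
    (o1 : {v : V // p v ≠ i} → W) : Set W :=
  {w | ∀ v : {v : V // p v ≠ i}, F.Adj i (p v.1) → G.Adj w (o1 v)}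

def OV (H : SimpleGraph V) (G : SimpleGraph W) (p : V → ι) (S : Finset ι) (i : ι)
    (o : ({v : V // p v ≠ i} → W) × ({v : V // p v ≠ i} → W)) : Prop :=
  ∀ u v : {v : V // p v ≠ i}, H.Adj u.1 v.1 →
    (p u.1 ≠ p v.1 → G.Adj (o.1 u) (o.1 v) ∧ G.Adj (o.2 u) (o.2 v)) ∧
    (p u.1 = p v.1 → (p u.1 ∈ S → G.Adj (o.1 u) (o.2 v)) ∧
      (p u.1 ∉ S → G.Adj (o.1 u) (o.1 v) ∧ G.Adj (o.2 u) (o.2 v)))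

def paste (p : V → ι) (i : ι) [DecidableEq ι] (o1 : {v : V // p v ≠ i} → W)
    (g : (p ⁻¹' {i} : Set V) → W) : V → W :=
  fun v => if h : p v = i then g ⟨v, h⟩ else o1 ⟨v, h⟩

lemma paste_pos (p : V → ι) (i : ι) [DecidableEq ι] (o1 : {v : V // p v ≠ i} → W)
    (g : (p ⁻¹' {i} : Set V) → W) (v : V) (h : p v = i) :
    paste p i o1 g v = g ⟨v, h⟩ := dif_pos h

lemma paste_neg (p : V → ι) (i : ι) [DecidableEq ι] (o1 : {v : V // p v ≠ i} → W)
    (g : (p ⁻¹' {i} : Set V) → W) (v : V) (h : ¬p v = i) :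
    paste p i o1 g v = o1 ⟨v, h⟩ := dif_neg h

variable {H : SimpleGraph V} {F : SimpleGraph ι} {G : SimpleGraph W} {p : V → ι}

lemma card_fiber_S [DecidableEq ι] (S : Finset ι) (i : ι) (hi : i ∉ S)
    (hadj : ∀ u v : V, p u ≠ p v → (H.Adj u v ↔ F.Adj (p u) (p v)))
    (o : ({v : V // p v ≠ i} → W) × ({v : V // p v ≠ i} → W))
    (hOV : OV H G p S i o) :
    Nat.card {x : {f : (V → W) × (V → W) // Cond H G p S f} //
        ((fun v : {v : V // p v ≠ i} => x.1.1 v.1, fun v : {v : V // p v ≠ i} => x.1.2 v.1)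
          : ({v : V // p v ≠ i} → W) × ({v : V // p v ≠ i} → W)) = o}
      = homCount (H.induce (p ⁻¹' {i})) (G.induce (setA F G p i o.1))
        * homCount (H.induce (p ⁻¹' {i})) (G.induce (setA F G p i o.2)) := by
  rw [homCount, homCount, ← Nat.card_prod]
  apply Nat.card_congr
  refine Equiv.ofBijective (fun x =>
    (⟨fun u => ⟨x.1.1.1 u.1, ?_⟩, ?_⟩, ⟨fun u => ⟨x.1.1.2 u.1, ?_⟩, ?_⟩)) ⟨?_, ?_⟩
  · -- membership in setA for layer 1
    intro v hFv
    have hu : p u.1 = i := u.2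
    have hne : p u.1 ≠ p v.1 := by rw [hu]; exact fun hh => v.2 hh.symm
    have hA : H.Adj u.1 v.1 := (hadj _ _ hne).mpr (by rw [hu]; exact hFv)
    have h1 := ((x.1.2 u.1 v.1 hA).1 hne).1
    have ho1 : x.1.1.1 v.1 = o.1 v := congrFun (congrArg Prod.fst x.2) v
    exact ho1 ▸ h1
  · -- adjacency for layer 1
    intro u v hK
    have hA : H.Adj u.1 v.1 := hK
    have hpe : p u.1 = p v.1 := (u.2 : p u.1 = i).trans (v.2 : p v.1 = i).symm
    have hmem : p u.1 ∉ S := by rw [(u.2 : p u.1 = i)]; exact hi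
    exact (((x.1.2 u.1 v.1 hA).2 hpe).2 hmem).1
  · -- membership in setA for layer 2
    intro v hFv
    have hu : p u.1 = i := u.2
    have hne : p u.1 ≠ p v.1 := by rw [hu]; exact fun hh => v.2 hh.symm
    have hA : H.Adj u.1 v.1 := (hadj _ _ hne).mpr (by rw [hu]; exact hFv)
    have h1 := ((x.1.2 u.1 v.1 hA).1 hne).2
    have ho2 : x.1.1.2 v.1 = o.2 v := congrFun (congrArg Prod.snd x.2) v
    exact ho2 ▸ h1
  · -- adjacency for layer 2
    intro u v hK
    have hA : H.Adj u.1 v.1 := hK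
    have hpe : p u.1 = p v.1 := (u.2 : p u.1 = i).trans (v.2 : p v.1 = i).symm
    have hmem : p u.1 ∉ S := by rw [(u.2 : p u.1 = i)]; exact hi
    exact (((x.1.2 u.1 v.1 hA).2 hpe).2 hmem).2
  · -- injectivity
    intro x y hxy
    have e1 := congrArg Prod.fst hxy
    have e2 := congrArg Prod.snd hxy
    refine Subtype.ext (Subtype.ext (Prod.ext (funext fun v => ?_) (funext fun v => ?_)))
    · by_cases h : p v = i
      · exact Subtype.ext_iff.mp (DFunLike.congr_fun e1 ⟨v, h⟩)
      · have hx := congrFun (congrArg Prod.fst x.2) ⟨v, h⟩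
        have hy := congrFun (congrArg Prod.fst y.2) ⟨v, h⟩
        exact hx.trans hy.symm
    · by_cases h : p v = i
      · exact Subtype.ext_iff.mp (DFunLike.congr_fun e2 ⟨v, h⟩)
      · have hx := congrFun (congrArg Prod.snd x.2) ⟨v, h⟩
        have hy := congrFun (congrArg Prod.snd y.2) ⟨v, h⟩
        exact hx.trans hy.symm
  · -- surjectivity
    rintro ⟨φ, ψ⟩
    have hcond : Cond H G p S
        (paste p i o.1 (fun u => (φ u).1), paste p i o.2 (fun u => (ψ u).1)) := by
      intro u v h
      constructor
      · intro hne
        by_cases hu : p u = i <;> by_cases hv : p v = i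
        · exact absurd (hu.trans hv.symm) hne
        · have hF : F.Adj i (p v) := by
            have := (hadj u v hne).mp h
            rwa [hu] at this
          constructor
          · show G.Adj (paste p i o.1 (fun u => (φ u).1) u) (paste p i o.1 (fun u => (φ u).1) v)
            rw [paste_pos p i o.1 _ u hu, paste_neg p i o.1 _ v hv]
            exact (φ ⟨u, hu⟩).2 ⟨v, hv⟩ hF
          · show G.Adj (paste p i o.2 (fun u => (ψ u).1) u) (paste p i o.2 (fun u => (ψ u).1) v)
            rw [paste_pos p i o.2 _ u hu, paste_neg p i o.2 _ v hv]
            exact (ψ ⟨u, hu⟩).2 ⟨v, hv⟩ hF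
        · have hF : F.Adj i (p u) := by
            have := ((hadj u v hne).mp h).symm
            rwa [hv] at this
          constructor
          · show G.Adj (paste p i o.1 (fun u => (φ u).1) u) (paste p i o.1 (fun u => (φ u).1) v)
            rw [paste_neg p i o.1 _ u hu, paste_pos p i o.1 _ v hv]
            exact ((φ ⟨v, hv⟩).2 ⟨u, hu⟩ hF).symm
          · show G.Adj (paste p i o.2 (fun u => (ψ u).1) u) (paste p i o.2 (fun u => (ψ u).1) v)
            rw [paste_neg p i o.2 _ u hu, paste_pos p i o.2 _ v hv]
            exact ((ψ ⟨v, hv⟩).2 ⟨u, hu⟩ hF).symm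
        · have h1 := (hOV ⟨u, hu⟩ ⟨v, hv⟩ h).1 hne
          constructor
          · show G.Adj (paste p i o.1 (fun u => (φ u).1) u) (paste p i o.1 (fun u => (φ u).1) v)
            rw [paste_neg p i o.1 _ u hu, paste_neg p i o.1 _ v hv]
            exact h1.1
          · show G.Adj (paste p i o.2 (fun u => (ψ u).1) u) (paste p i o.2 (fun u => (ψ u).1) v)
            rw [paste_neg p i o.2 _ u hu, paste_neg p i o.2 _ v hv]
            exact h1.2
      · intro hpe
        by_cases hu : p u = i
        · have hv : p v = i := by rw [← hpe]; exact hu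
          refine ⟨fun hmem => absurd (hu ▸ hmem) hi, fun _ => ?_⟩
          constructor
          · show G.Adj (paste p i o.1 (fun u => (φ u).1) u) (paste p i o.1 (fun u => (φ u).1) v)
            rw [paste_pos p i o.1 _ u hu, paste_pos p i o.1 _ v hv]
            exact φ.map_adj h
          · show G.Adj (paste p i o.2 (fun u => (ψ u).1) u) (paste p i o.2 (fun u => (ψ u).1) v)
            rw [paste_pos p i o.2 _ u hu, paste_pos p i o.2 _ v hv]
            exact ψ.map_adj h
        · have hv : p v ≠ i := fun hh => hu (hpe.trans hh)
          have h1 := (hOV ⟨u, hu⟩ ⟨v, hv⟩ h).2 hpe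
          refine ⟨fun hmem => ?_, fun hmem => ?_⟩
          · show G.Adj (paste p i o.1 (fun u => (φ u).1) u) (paste p i o.2 (fun u => (ψ u).1) v)
            rw [paste_neg p i o.1 _ u hu, paste_neg p i o.2 _ v hv]
            exact h1.1 hmem
          · constructor
            · show G.Adj (paste p i o.1 (fun u => (φ u).1) u) (paste p i o.1 (fun u => (φ u).1) v)
              rw [paste_neg p i o.1 _ u hu, paste_neg p i o.1 _ v hv]
              exact (h1.2 hmem).1
            · show G.Adj (paste p i o.2 (fun u => (ψ u).1) u) (paste p i o.2 (fun u => (ψ u).1) v)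
              rw [paste_neg p i o.2 _ u hu, paste_neg p i o.2 _ v hv]
              exact (h1.2 hmem).2
    have hres : ((fun v : {v : V // p v ≠ i} => paste p i o.1 (fun u => (φ u).1) v.1,
        fun v : {v : V // p v ≠ i} => paste p i o.2 (fun u => (ψ u).1) v.1)
          : ({v : V // p v ≠ i} → W) × ({v : V // p v ≠ i} → W)) = o := by
      refine Prod.ext (funext fun v => ?_) (funext fun v => ?_) <;>
        simp [paste, dif_neg v.2]
    refine ⟨⟨⟨_, hcond⟩, hres⟩, ?_⟩
    refine Prod.ext ?_ ?_
    · refine DFunLike.ext _ _ fun u => Subtype.ext ?_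
      show paste p i o.1 (fun u => (φ u).1) u.1 = (φ u).1
      rw [paste_pos p i o.1 _ u.1 u.2]
    · refine DFunLike.ext _ _ fun u => Subtype.ext ?_
      show paste p i o.2 (fun u => (ψ u).1) u.1 = (ψ u).1
      rw [paste_pos p i o.2 _ u.1 u.2]

end Step

section Step2

variable {V ι W : Type} {H : SimpleGraph V} {F : SimpleGraph ι} {G : SimpleGraph W} {p : V → ι}

lemma card_fiber_insert [DecidableEq ι] (S : Finset ι) (i : ι)
    (hadj : ∀ u v : V, p u ≠ p v → (H.Adj u v ↔ F.Adj (p u) (p v)))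
    (o : ({v : V // p v ≠ i} → W) × ({v : V // p v ≠ i} → W))
    (hOV : OV H G p S i o) :
    Nat.card {x : {f : (V → W) × (V → W) // Cond H G p (insert i S) f} //
        ((fun v : {v : V // p v ≠ i} => x.1.1 v.1, fun v : {v : V // p v ≠ i} => x.1.2 v.1)
          : ({v : V // p v ≠ i} → W) × ({v : V // p v ≠ i} → W)) = o}
      = homB (H.induce (p ⁻¹' {i})) G (setA F G p i o.1) (setA F G p i o.2) := by
  rw [homB]
  apply Nat.card_congr
  refine Equiv.ofBijective (fun x =>
    ⟨⟨fun z => if z.2 = 0 then x.1.1.1 z.1.1 else x.1.1.2 z.1.1, ?_⟩, ?_, ?_⟩) ⟨?_, ?_⟩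
  · -- map_rel
    intro a b hab
    obtain ⟨hK, hj⟩ := hab
    have hA : H.Adj a.1.1 b.1.1 := hK
    have hpe : p a.1.1 = p b.1.1 := (a.1.2 : p a.1.1 = i).trans (b.1.2 : p b.1.1 = i).symm
    have hmem : p a.1.1 ∈ insert i S := by
      rw [(a.1.2 : p a.1.1 = i)]; exact Finset.mem_insert_self i S
    have hmem' : p b.1.1 ∈ insert i S := by
      rw [(b.1.2 : p b.1.1 = i)]; exact Finset.mem_insert_self i S
    rcases fin2_cases hj with ⟨h0, h1⟩ | ⟨h0, h1⟩
    · simp only [h0, h1]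
      norm_num
      exact ((x.1.2 a.1.1 b.1.1 hA).2 hpe).1 hmem
    · simp only [h0, h1]
      norm_num
      exact (((x.1.2 b.1.1 a.1.1 hA.symm).2 hpe.symm).1 hmem').symm
  · -- side condition A
    intro u
    simp only [relHom_mk_apply]
    norm_num
    intro v hFv
    have hu : p u.1 = i := u.2
    have hne : p u.1 ≠ p v.1 := by rw [hu]; exact fun hh => v.2 hh.symm
    have hAd : H.Adj u.1 v.1 := (hadj _ _ hne).mpr (by rw [hu]; exact hFv)
    have h1 := ((x.1.2 u.1 v.1 hAd).1 hne).1
    have ho1 : x.1.1.1 v.1 = o.1 v := congrFun (congrArg Prod.fst x.2) v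
    exact ho1 ▸ h1
  · -- side condition B
    intro u
    simp only [relHom_mk_apply]
    norm_num
    intro v hFv
    have hu : p u.1 = i := u.2
    have hne : p u.1 ≠ p v.1 := by rw [hu]; exact fun hh => v.2 hh.symm
    have hAd : H.Adj u.1 v.1 := (hadj _ _ hne).mpr (by rw [hu]; exact hFv)
    have h1 := ((x.1.2 u.1 v.1 hAd).1 hne).2
    have ho2 : x.1.1.2 v.1 = o.2 v := congrFun (congrArg Prod.snd x.2) v
    exact ho2 ▸ h1
  · -- injectivity
    intro x y hxy
    have e1 := congrArg (fun t => t.1.toFun) hxy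
    refine Subtype.ext (Subtype.ext (Prod.ext (funext fun v => ?_) (funext fun v => ?_)))
    · by_cases h : p v = i
      · have h2 := congrFun e1 (⟨v, h⟩, 0)
        simpa using h2
      · have hx := congrFun (congrArg Prod.fst x.2) ⟨v, h⟩
        have hy := congrFun (congrArg Prod.fst y.2) ⟨v, h⟩
        exact hx.trans hy.symm
    · by_cases h : p v = i
      · have h2 := congrFun e1 (⟨v, h⟩, 1)
        simpa using h2
      · have hx := congrFun (congrArg Prod.snd x.2) ⟨v, h⟩
        have hy := congrFun (congrArg Prod.snd y.2) ⟨v, h⟩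
        exact hx.trans hy.symm
  · -- surjectivity
    rintro ⟨χ, hsA, hsB⟩
    have hcond : Cond H G p (insert i S)
        (paste p i o.1 (fun u => χ (u, 0)), paste p i o.2 (fun u => χ (u, 1))) := by
      intro u v h
      constructor
      · intro hne
        by_cases hu : p u = i <;> by_cases hv : p v = i
        · exact absurd (hu.trans hv.symm) hne
        · have hF : F.Adj i (p v) := by
            have := (hadj u v hne).mp h
            rwa [hu] at this
          constructor
          · show G.Adj (paste p i o.1 (fun u => χ (u, 0)) u) (paste p i o.1 (fun u => χ (u, 0)) v)
            rw [paste_pos p i o.1 _ u hu, paste_neg p i o.1 _ v hv]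
            exact hsA ⟨u, hu⟩ ⟨v, hv⟩ hF
          · show G.Adj (paste p i o.2 (fun u => χ (u, 1)) u) (paste p i o.2 (fun u => χ (u, 1)) v)
            rw [paste_pos p i o.2 _ u hu, paste_neg p i o.2 _ v hv]
            exact hsB ⟨u, hu⟩ ⟨v, hv⟩ hF
        · have hF : F.Adj i (p u) := by
            have := ((hadj u v hne).mp h).symm
            rwa [hv] at this
          constructor
          · show G.Adj (paste p i o.1 (fun u => χ (u, 0)) u) (paste p i o.1 (fun u => χ (u, 0)) v)
            rw [paste_neg p i o.1 _ u hu, paste_pos p i o.1 _ v hv]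
            exact (hsA ⟨v, hv⟩ ⟨u, hu⟩ hF).symm
          · show G.Adj (paste p i o.2 (fun u => χ (u, 1)) u) (paste p i o.2 (fun u => χ (u, 1)) v)
            rw [paste_neg p i o.2 _ u hu, paste_pos p i o.2 _ v hv]
            exact (hsB ⟨v, hv⟩ ⟨u, hu⟩ hF).symm
        · have h1 := (hOV ⟨u, hu⟩ ⟨v, hv⟩ h).1 hne
          constructor
          · show G.Adj (paste p i o.1 (fun u => χ (u, 0)) u) (paste p i o.1 (fun u => χ (u, 0)) v)
            rw [paste_neg p i o.1 _ u hu, paste_neg p i o.1 _ v hv]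
            exact h1.1
          · show G.Adj (paste p i o.2 (fun u => χ (u, 1)) u) (paste p i o.2 (fun u => χ (u, 1)) v)
            rw [paste_neg p i o.2 _ u hu, paste_neg p i o.2 _ v hv]
            exact h1.2
      · intro hpe
        by_cases hu : p u = i
        · have hv : p v = i := by rw [← hpe]; exact hu
          refine ⟨fun _ => ?_, fun hmem => absurd (Finset.mem_insert_self i S) (hu ▸ hmem)⟩
          show G.Adj (paste p i o.1 (fun u => χ (u, 0)) u) (paste p i o.2 (fun u => χ (u, 1)) v)
          rw [paste_pos p i o.1 _ u hu, paste_pos p i o.2 _ v hv]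
          exact χ.map_adj (tensor_adj (H.induce (p ⁻¹' {i})) (show (H.induce (p ⁻¹' {i})).Adj ⟨u, hu⟩ ⟨v, hv⟩ from h) 0 1 (by decide))
        · have hv : p v ≠ i := fun hh => hu (hpe.trans hh)
          have h1 := (hOV ⟨u, hu⟩ ⟨v, hv⟩ h).2 hpe
          refine ⟨fun hmem => ?_, fun hmem => ?_⟩
          · rcases Finset.mem_insert.mp hmem with hii | hS
            · exact absurd hii hu
            · show G.Adj (paste p i o.1 (fun u => χ (u, 0)) u) (paste p i o.2 (fun u => χ (u, 1)) v)
              rw [paste_neg p i o.1 _ u hu, paste_neg p i o.2 _ v hv]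
              exact h1.1 hS
          · have hS : p u ∉ S := fun hS => hmem (Finset.mem_insert_of_mem hS)
            constructor
            · show G.Adj (paste p i o.1 (fun u => χ (u, 0)) u) (paste p i o.1 (fun u => χ (u, 0)) v)
              rw [paste_neg p i o.1 _ u hu, paste_neg p i o.1 _ v hv]
              exact (h1.2 hS).1
            · show G.Adj (paste p i o.2 (fun u => χ (u, 1)) u) (paste p i o.2 (fun u => χ (u, 1)) v)
              rw [paste_neg p i o.2 _ u hu, paste_neg p i o.2 _ v hv]
              exact (h1.2 hS).2
    have hres : ((fun v : {v : V // p v ≠ i} => paste p i o.1 (fun u => χ (u, 0)) v.1,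
        fun v : {v : V // p v ≠ i} => paste p i o.2 (fun u => χ (u, 1)) v.1)
          : ({v : V // p v ≠ i} → W) × ({v : V // p v ≠ i} → W)) = o := by
      refine Prod.ext (funext fun v => ?_) (funext fun v => ?_) <;>
        simp [paste, dif_neg v.2]
    refine ⟨⟨⟨_, hcond⟩, hres⟩, ?_⟩
    refine Subtype.ext (DFunLike.ext _ _ fun z => ?_)
    obtain ⟨zu, zj⟩ := z
    simp only [relHom_mk_apply]
    rcases fin2_or zj with hj | hj <;> subst hj
    · show (if (0 : Fin 2) = 0 then paste p i o.1 (fun u => χ (u, 0)) zu.1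
        else paste p i o.2 (fun u => χ (u, 1)) zu.1) = χ (zu, 0)
      rw [if_pos rfl, paste_pos p i o.1 _ zu.1 zu.2]
    · show (if (1 : Fin 2) = 0 then paste p i o.1 (fun u => χ (u, 0)) zu.1
        else paste p i o.2 (fun u => χ (u, 1)) zu.1) = χ (zu, 1)
      rw [if_neg (by decide : ¬(1 : Fin 2) = 0), paste_pos p i o.2 _ zu.1 zu.2]

end Step2

lemma card_le_of_fiber_le {X Y O : Type} [Finite X] [Finite Y] [Finite O]
    (gX : X → O) (gY : Y → O)
    (h : ∀ o, Nat.card {x // gX x = o} ≤ Nat.card {y // gY y = o}) :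
    Nat.card X ≤ Nat.card Y := by
  classical
  cases nonempty_fintype X; cases nonempty_fintype Y; cases nonempty_fintype O
  rw [Nat.card_eq_fintype_card, Nat.card_eq_fintype_card,
    ← Fintype.card_congr (Equiv.sigmaFiberEquiv gX),
    ← Fintype.card_congr (Equiv.sigmaFiberEquiv gY),
    Fintype.card_sigma, Fintype.card_sigma]
  exact Finset.sum_le_sum fun o _ => by
    simpa [Nat.card_eq_fintype_card] using h o

lemma hom_sq_eq {V ι W : Type} (H : SimpleGraph V) (G : SimpleGraph W) (p : V → ι) :
    homCount H G ^ 2 = Nat.card {f : (V → W) × (V → W) // Cond H G p ∅ f} := by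
  rw [homCount, sq, ← Nat.card_prod]
  apply Nat.card_congr
  refine ⟨fun x => ⟨(x.1, x.2), fun u v h => ?_⟩,
    fun y => (⟨fun v => y.1.1 v, fun {u v} h => ?_⟩, ⟨fun v => y.1.2 v, fun {u v} h => ?_⟩),
    fun x => rfl, fun y => rfl⟩
  · exact ⟨fun _ => ⟨x.1.map_adj h, x.2.map_adj h⟩,
      fun _ => ⟨fun hm => absurd hm (Finset.notMem_empty _),
        fun _ => ⟨x.1.map_adj h, x.2.map_adj h⟩⟩⟩
  · rcases y.2 u v h with ⟨h1, h2⟩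
    by_cases hpe : p u = p v
    · exact ((h2 hpe).2 (Finset.notMem_empty _)).1
    · exact (h1 hpe).1
  · rcases y.2 u v h with ⟨h1, h2⟩
    by_cases hpe : p u = p v
    · exact ((h2 hpe).2 (Finset.notMem_empty _)).2
    · exact (h1 hpe).2

lemma step_le {V ι W : Type} [Fintype V] [Fintype W] [DecidableEq ι]
    (H : SimpleGraph V) (F : SimpleGraph ι) (G : SimpleGraph W) (p : V → ι)
    (hadj : ∀ u v : V, p u ≠ p v → (H.Adj u v ↔ F.Adj (p u) (p v)))
    (S : Finset ι) (i : ι) (hi : i ∉ S)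
    (hCBS : CrossBipartiteSwapping (H.induce (p ⁻¹' {i})) G) :
    Nat.card {f : (V → W) × (V → W) // Cond H G p S f}
      ≤ Nat.card {f : (V → W) × (V → W) // Cond H G p (insert i S) f} := by
  classical
  refine card_le_of_fiber_le (O := (({v : V // p v ≠ i} → W) × ({v : V // p v ≠ i} → W)))
    (fun x => (fun v => x.1.1 v.1, fun v => x.1.2 v.1))
    (fun x => (fun v => x.1.1 v.1, fun v => x.1.2 v.1)) ?_
  intro o
  by_cases hne : Nonempty {x : {f : (V → W) × (V → W) // Cond H G p S f} //
      ((fun v : {v : V // p v ≠ i} => x.1.1 v.1, fun v : {v : V // p v ≠ i} => x.1.2 v.1)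
        : ({v : V // p v ≠ i} → W) × ({v : V // p v ≠ i} → W)) = o}
  · obtain ⟨⟨⟨f, hf⟩, hres⟩⟩ := hne
    have hOV : OV H G p S i o := by
      subst hres
      intro u v h
      exact hf u.1 v.1 h
    rw [card_fiber_S S i hi hadj o hOV, card_fiber_insert S i hadj o hOV]
    exact hCBS (setA F G p i o.1) (setA F G p i o.2)
  · rw [not_nonempty_iff] at hne
    rw [Nat.card_of_isEmpty]
    exact Nat.zero_le _


/-- If every part of the blow-up `H` of a bipartite graph `F` is
cross-bipartite swapping in `G`, then `H` is bipartite swapping in `G`: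
`hom(H,G)² ≤ hom(H × K₂, G)`. -/
theorem stmt10 {V ι W : Type} [Fintype V] [Fintype W]
    (H : SimpleGraph V) (F : SimpleGraph ι) (G : SimpleGraph W)
    (hF : F.Colorable 2)
    (hblow : IsBlowUpOf H F fun _ K => CrossBipartiteSwapping K G) :
    homCount H G ^ 2 ≤ homCount (tensorK2 H) G := by
  classical
  obtain ⟨p, hsurj, hadj, hparts⟩ := hblow
  haveI : Finite ι := Finite.of_surjective p hsurj
  haveI : Fintype ι := Fintype.ofFinite ι
  obtain ⟨C⟩ := hF
  rw [hom_sq_eq H G p, hom_tensor_eq H F G p C hadj]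
  have key : ∀ S : Finset ι,
      Nat.card {f : (V → W) × (V → W) // Cond H G p ∅ f}
        ≤ Nat.card {f : (V → W) × (V → W) // Cond H G p S f} := by
    intro S
    induction S using Finset.induction_on with
    | empty => exact le_rfl
    | @insert i S hi ih =>
      exact le_trans ih (step_le H F G p hadj S i hi (hparts i))
  exact key Finset.univ
end

section
/- Let G be a finite simple graph and let F be a bipartite graph with vertices v_1,…,v_m. Let H be an 𝓗-blow-up of F obtained by replacing each v_i by H_i, where every H_i is cross-bipartite swapping in G. Then for every U ⊆ V(F) and every u ∈ V(F) \ U, hom(H^U, G) ≤ hom(H^{U ∪ {u}}, G). -/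
open SimpleGraph

/-- The graph `H^U` built from two disjoint copies of the blow-up `H` of `F`
(with blow-up projection `p : V(H) → V(F)`), where for every `j ∈ U` the two copies
`H_j ⊔ H_j` of the part above `j` are replaced by `H_j × K₂`; all complete-bipartite
connections coming from edges of `F` are kept within each copy. -/
def swapped {V ι : Type} (H : SimpleGraph V) (F : SimpleGraph ι) (p : V → ι)
    (U : Set ι) : SimpleGraph (V × Fin 2) where
  Adj x y :=
    (p x.1 ≠ p y.1 ∧ F.Adj (p x.1) (p y.1) ∧ x.2 = y.2) ∨
    (p x.1 = p y.1 ∧ H.Adj x.1 y.1 ∧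
      ((p x.1 ∈ U ∧ x.2 ≠ y.2) ∨ (p x.1 ∉ U ∧ x.2 = y.2)))
  symm := by
    constructor
    rintro x y (⟨h1, h2, h3⟩ | ⟨h1, h2, h3⟩)
    · exact Or.inl ⟨Ne.symm h1, h2.symm, h3.symm⟩
    · refine Or.inr ⟨h1.symm, h2.symm, ?_⟩
      rcases h3 with ⟨hu, hne⟩ | ⟨hu, heq⟩
      · exact Or.inl ⟨h1 ▸ hu, hne.symm⟩
      · exact Or.inr ⟨h1 ▸ hu, heq.symm⟩
  loopless := by
    constructor
    rintro x (⟨h1, -, -⟩ | ⟨-, h2, -⟩)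
    · exact h1 rfl
    · exact H.loopless.irrefl _ h2

section Aux
variable {V ι W : Type} [DecidableEq ι]

private lemma fin2cases (i : Fin 2) : i = 0 ∨ i = 1 := by omega

def sideSet (F : SimpleGraph ι) (G : SimpleGraph W) (p : V → ι) (u : ι)
    (g : {x : V × Fin 2 // p x.1 ≠ u} → W) (i : Fin 2) : Set W :=
  {w | ∀ k : {x : V × Fin 2 // p x.1 ≠ u}, F.Adj u (p k.1.1) → k.1.2 = i → G.Adj w (g k)}

def Good (H : SimpleGraph V) (F : SimpleGraph ι) (G : SimpleGraph W) (p : V → ι) (u : ι)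
    (Q : Set ι) (g : {x : V × Fin 2 // p x.1 ≠ u} → W) : Prop :=
  ∀ k k' : {x : V × Fin 2 // p x.1 ≠ u},
    (swapped H F p Q).Adj k.1 k'.1 → G.Adj (g k) (g k')

variable {H : SimpleGraph V} {F : SimpleGraph ι} {G : SimpleGraph W} {p : V → ι} {u : ι}

def extFun (g : {x : V × Fin 2 // p x.1 ≠ u} → W)
    (h : ↥(p ⁻¹' {u}) × Fin 2 → W) : V × Fin 2 → W :=
  fun x => if hx : p x.1 = u then h (⟨x.1, hx⟩, x.2) else g ⟨x, hx⟩

lemma extU_hom (U : Set ι) (hu : u ∉ U) (g : {x : V × Fin 2 // p x.1 ≠ u} → W)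
    (hg : Good H F G p u U g)
    (h0 : (H.induce (p ⁻¹' {u})) →g (G.induce (sideSet F G p u g 0)))
    (h1 : (H.induce (p ⁻¹' {u})) →g (G.induce (sideSet F G p u g 1)))
    {x y : V × Fin 2} (hadj : (swapped H F p U).Adj x y) :
    G.Adj (extFun g (fun z => if z.2 = 0 then (h0 z.1 : W) else (h1 z.1 : W)) x)
          (extFun g (fun z => if z.2 = 0 then (h0 z.1 : W) else (h1 z.1 : W)) y) := by
  obtain ⟨xv, xi⟩ := x
  obtain ⟨yv, yi⟩ := y
  by_cases hx : p xv = u <;> by_cases hy : p yv = u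
  · rcases hadj with ⟨h1', -, -⟩ | ⟨-, h2, ⟨hm, -⟩ | ⟨-, h3⟩⟩
    · exact absurd (hx.trans hy.symm) h1'
    · exact absurd (hx ▸ hm) hu
    · simp only [extFun, dif_pos hx, dif_pos hy]
      cases h3
      rcases fin2cases xi with rfl | rfl
      · simpa using h0.map_adj (show (H.induce _).Adj ⟨xv, hx⟩ ⟨yv, hy⟩ from h2)
      · simpa using h1.map_adj (show (H.induce _).Adj ⟨xv, hx⟩ ⟨yv, hy⟩ from h2)
  · rcases hadj with ⟨-, h2, h3⟩ | ⟨h1', -, -⟩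
    · simp only [extFun, dif_pos hx, dif_neg hy]
      rcases fin2cases xi with rfl | rfl
      · simpa using (h0 ⟨xv, hx⟩).2 ⟨(yv, yi), hy⟩ (hx ▸ h2) h3.symm
      · simpa using (h1 ⟨xv, hx⟩).2 ⟨(yv, yi), hy⟩ (hx ▸ h2) h3.symm
    · exact absurd (h1'.symm.trans hx) hy
  · rcases hadj with ⟨-, h2, h3⟩ | ⟨h1', -, -⟩
    · simp only [extFun, dif_neg hx, dif_pos hy]
      refine G.adj_symm ?_
      rcases fin2cases yi with rfl | rfl
      · simpa using (h0 ⟨yv, hy⟩).2 ⟨(xv, xi), hx⟩ (hy ▸ h2.symm) h3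
      · simpa using (h1 ⟨yv, hy⟩).2 ⟨(xv, xi), hx⟩ (hy ▸ h2.symm) h3
    · exact absurd (h1'.trans hy) hx
  · simp only [extFun, dif_neg hx, dif_neg hy]
    exact hg ⟨(xv, xi), hx⟩ ⟨(yv, yi), hy⟩ hadj

lemma swapped_outer_adj {U : Set ι} {x y : V × Fin 2}
    (hx : p x.1 ≠ u) (hadj : (swapped H F p (insert u U)).Adj x y) :
    (swapped H F p U).Adj x y := by
  rcases hadj with h | ⟨h1, h2, ⟨hm, h3⟩ | ⟨hm, h3⟩⟩
  · exact Or.inl h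
  · rcases hm with hm | hm
    · exact absurd hm hx
    · exact Or.inr ⟨h1, h2, Or.inl ⟨hm, h3⟩⟩
  · exact Or.inr ⟨h1, h2, Or.inr ⟨fun hmem => hm (Set.mem_insert_of_mem _ hmem), h3⟩⟩

lemma extU'_hom (U : Set ι) (g : {x : V × Fin 2 // p x.1 ≠ u} → W)
    (hg : Good H F G p u U g)
    (f' : {f : tensorK2 (H.induce (p ⁻¹' {u})) →g G //
      (∀ v, f (v, 0) ∈ sideSet F G p u g 0) ∧ (∀ v, f (v, 1) ∈ sideSet F G p u g 1)})
    {x y : V × Fin 2} (hadj : (swapped H F p (insert u U)).Adj x y) :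
    G.Adj (extFun g (fun z => f'.1 z) x) (extFun g (fun z => f'.1 z) y) := by
  obtain ⟨xv, xi⟩ := x
  obtain ⟨yv, yi⟩ := y
  by_cases hx : p xv = u <;> by_cases hy : p yv = u
  · rcases hadj with ⟨h1', -, -⟩ | ⟨-, h2, ⟨-, h3⟩ | ⟨hm, -⟩⟩
    · exact absurd (hx.trans hy.symm) h1'
    · simp only [extFun, dif_pos hx, dif_pos hy]
      exact f'.1.map_adj ⟨h2, h3⟩
    · exact absurd (Set.mem_insert_iff.mpr (Or.inl hx)) hm
  · rcases hadj with ⟨-, h2, h3⟩ | ⟨h1', -, -⟩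
    · simp only [extFun, dif_pos hx, dif_neg hy]
      rcases fin2cases xi with rfl | rfl
      · exact f'.2.1 ⟨xv, hx⟩ ⟨(yv, yi), hy⟩ (hx ▸ h2) h3.symm
      · exact f'.2.2 ⟨xv, hx⟩ ⟨(yv, yi), hy⟩ (hx ▸ h2) h3.symm
    · exact absurd (h1'.symm.trans hx) hy
  · rcases hadj with ⟨-, h2, h3⟩ | ⟨h1', -, -⟩
    · simp only [extFun, dif_neg hx, dif_pos hy]
      refine G.adj_symm ?_
      rcases fin2cases yi with rfl | rfl
      · exact f'.2.1 ⟨yv, hy⟩ ⟨(xv, xi), hx⟩ (hy ▸ h2.symm) h3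
      · exact f'.2.2 ⟨yv, hy⟩ ⟨(xv, xi), hx⟩ (hy ▸ h2.symm) h3
    · exact absurd (h1'.trans hy) hx
  · simp only [extFun, dif_neg hx, dif_neg hy]
    exact hg ⟨(xv, xi), hx⟩ ⟨(yv, yi), hy⟩ (swapped_outer_adj hx hadj)

def Fib (H : SimpleGraph V) (F : SimpleGraph ι) (G : SimpleGraph W) (p : V → ι) (u : ι)
    (Q : Set ι) (g : {x : V × Fin 2 // p x.1 ≠ u} → W) : Type :=
  {f : swapped H F p Q →g G // (fun k : {x : V × Fin 2 // p x.1 ≠ u} => f k.1) = g}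

/-- Gluing for the `U` case. -/
def glue (U : Set ι) (hu : u ∉ U) (g : {x : V × Fin 2 // p x.1 ≠ u} → W)
    (hg : Good H F G p u U g)
    (h0 : (H.induce (p ⁻¹' {u})) →g (G.induce (sideSet F G p u g 0)))
    (h1 : (H.induce (p ⁻¹' {u})) →g (G.induce (sideSet F G p u g 1))) :
    Fib H F G p u U g :=
  ⟨⟨extFun g (fun z => if z.2 = 0 then (h0 z.1 : W) else (h1 z.1 : W)),
    fun hadj => extU_hom U hu g hg h0 h1 hadj⟩,
    funext fun k => by
      show extFun g (fun z => if z.2 = 0 then (h0 z.1 : W) else (h1 z.1 : W)) k.1 = g k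
      rw [extFun, dif_neg k.2]⟩

lemma glue_apply (U : Set ι) (hu : u ∉ U) (g : {x : V × Fin 2 // p x.1 ≠ u} → W)
    (hg : Good H F G p u U g) (h0) (h1) (x : V × Fin 2) :
    (glue U hu g hg h0 h1).1 x =
      if hx : p x.1 = u then (if x.2 = 0 then (h0 ⟨x.1, hx⟩ : W) else (h1 ⟨x.1, hx⟩ : W))
      else g ⟨x, hx⟩ := rfl

/-- Restriction to the fiber of `u`, side `i ∈ {0,1}`. -/
def toSide (U : Set ι) (hu : u ∉ U) (g : {x : V × Fin 2 // p x.1 ≠ u} → W)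
    (i : Fin 2) (f : Fib H F G p u U g) :
    (H.induce (p ⁻¹' {u})) →g (G.induce (sideSet F G p u g i)) :=
  ⟨fun v => ⟨f.1 (v.1, i), fun k hF hk => by
      rw [← congrFun f.2 k]
      refine f.1.map_adj (Or.inl ⟨?_, ?_, hk.symm⟩)
      · rw [show p v.1 = u from v.2]; exact fun h => k.2 h.symm
      · rw [show p v.1 = u from v.2]; exact hF⟩,
    fun {a b} hab => f.1.map_adj (Or.inr ⟨by rw [show p a.1 = u from a.2, show p b.1 = u from b.2],
      hab, Or.inr ⟨by rw [show p a.1 = u from a.2]; exact hu, rfl⟩⟩)⟩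

lemma toSide_apply (U : Set ι) (hu : u ∉ U) (g : {x : V × Fin 2 // p x.1 ≠ u} → W)
    (i : Fin 2) (f : Fib H F G p u U g) (v : ↥(p ⁻¹' {u})) :
    (toSide U hu g i f v : W) = f.1 (v.1, i) := rfl

def equivU (U : Set ι) (hu : u ∉ U) (g : {x : V × Fin 2 // p x.1 ≠ u} → W)
    (hg : Good H F G p u U g) :
    Fib H F G p u U g ≃
      ((H.induce (p ⁻¹' {u})) →g (G.induce (sideSet F G p u g 0))) ×
      ((H.induce (p ⁻¹' {u})) →g (G.induce (sideSet F G p u g 1))) where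
  toFun f := (toSide U hu g 0 f, toSide U hu g 1 f)
  invFun h := glue U hu g hg h.1 h.2
  left_inv f := by
    apply Subtype.ext
    apply DFunLike.ext
    rintro ⟨xv, xi⟩
    rw [glue_apply]
    by_cases hx : p xv = u
    · rw [dif_pos hx]
      rcases fin2cases xi with rfl | rfl
      · simpa using toSide_apply U hu g 0 f ⟨xv, hx⟩
      · simpa using toSide_apply U hu g 1 f ⟨xv, hx⟩
    · rw [dif_neg hx]
      exact (congrFun f.2 ⟨(xv, xi), hx⟩).symm
  right_inv h := by
    refine Prod.ext ?_ ?_ <;> apply DFunLike.ext <;> intro v <;> apply Subtype.ext <;>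
      rw [toSide_apply, glue_apply, dif_pos (show p v.1 = u from v.2)] <;> simp

/-- Gluing for the `insert u U` case. -/
def glue' (U : Set ι) (g : {x : V × Fin 2 // p x.1 ≠ u} → W)
    (hg : Good H F G p u U g)
    (f' : {f : tensorK2 (H.induce (p ⁻¹' {u})) →g G //
      (∀ v, f (v, 0) ∈ sideSet F G p u g 0) ∧ (∀ v, f (v, 1) ∈ sideSet F G p u g 1)}) :
    Fib H F G p u (insert u U) g :=
  ⟨⟨extFun g (fun z => f'.1 z), fun hadj => extU'_hom U g hg f' hadj⟩,
    funext fun k => by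
      show extFun g (fun z => f'.1 z) k.1 = g k
      rw [extFun, dif_neg k.2]⟩

lemma glue'_apply (U : Set ι) (g : {x : V × Fin 2 // p x.1 ≠ u} → W)
    (hg : Good H F G p u U g) (f') (x : V × Fin 2) :
    (glue' U g hg f').1 x =
      if hx : p x.1 = u then f'.1 (⟨x.1, hx⟩, x.2) else g ⟨x, hx⟩ := rfl

/-- Restriction to the fiber of `u` as a tensor homomorphism. -/
def toTensor (U : Set ι) (g : {x : V × Fin 2 // p x.1 ≠ u} → W)
    (f : Fib H F G p u (insert u U) g) :
    {f' : tensorK2 (H.induce (p ⁻¹' {u})) →g G //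
      (∀ v, f' (v, 0) ∈ sideSet F G p u g 0) ∧ (∀ v, f' (v, 1) ∈ sideSet F G p u g 1)} :=
  ⟨⟨fun z => f.1 (z.1.1, z.2), fun {a b} hab =>
      f.1.map_adj (Or.inr ⟨by rw [show p a.1.1 = u from a.1.2, show p b.1.1 = u from b.1.2],
        hab.1, Or.inl ⟨by rw [show p a.1.1 = u from a.1.2]; exact Set.mem_insert u U, hab.2⟩⟩)⟩,
    ⟨fun v k hF hk => by
      rw [← congrFun f.2 k]
      refine f.1.map_adj (Or.inl ⟨?_, ?_, hk.symm⟩)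
      · rw [show p v.1 = u from v.2]; exact fun h => k.2 h.symm
      · rw [show p v.1 = u from v.2]; exact hF,
    fun v k hF hk => by
      rw [← congrFun f.2 k]
      refine f.1.map_adj (Or.inl ⟨?_, ?_, hk.symm⟩)
      · rw [show p v.1 = u from v.2]; exact fun h => k.2 h.symm
      · rw [show p v.1 = u from v.2]; exact hF⟩⟩

lemma toTensor_apply (U : Set ι) (g : {x : V × Fin 2 // p x.1 ≠ u} → W)
    (f : Fib H F G p u (insert u U) g) (z : ↥(p ⁻¹' {u}) × Fin 2) :
    ((toTensor U g f).1 z : W) = f.1 (z.1.1, z.2) := rfl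

def equivU' (U : Set ι) (g : {x : V × Fin 2 // p x.1 ≠ u} → W)
    (hg : Good H F G p u U g) :
    Fib H F G p u (insert u U) g ≃
      {f' : tensorK2 (H.induce (p ⁻¹' {u})) →g G //
        (∀ v, f' (v, 0) ∈ sideSet F G p u g 0) ∧ (∀ v, f' (v, 1) ∈ sideSet F G p u g 1)} where
  toFun f := toTensor U g f
  invFun f' := glue' U g hg f'
  left_inv f := by
    apply Subtype.ext
    apply DFunLike.ext
    rintro ⟨xv, xi⟩
    rw [glue'_apply]
    by_cases hx : p xv = u
    · rw [dif_pos hx]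
      exact toTensor_apply U g f (⟨xv, hx⟩, xi)
    · rw [dif_neg hx]
      exact (congrFun f.2 ⟨(xv, xi), hx⟩).symm
  right_inv f' := by
    apply Subtype.ext
    apply DFunLike.ext
    intro z
    rw [toTensor_apply, glue'_apply, dif_pos (show p z.1.1 = u from z.1.2)]
end Aux

private lemma nat_card_sigma {α : Type} [Fintype α] (f : α → Type) [∀ a, Finite (f a)] :
    Nat.card (Σ a, f a) = ∑ a, Nat.card (f a) := by
  letI := fun a => Fintype.ofFinite (f a)
  simp [Nat.card_eq_fintype_card, Fintype.card_sigma]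

/-- Let `H` be a blow-up of a bipartite graph `F` (with projection `p`)
whose parts are all cross-bipartite swapping in `G`. Then for every `U ⊆ V(F)` and every
`u ∉ U`, `hom(H^U, G) ≤ hom(H^{U ∪ {u}}, G)`. -/
theorem stmt11 {V ι W : Type} [Fintype V] [Fintype W]
    (H : SimpleGraph V) (F : SimpleGraph ι) (G : SimpleGraph W)
    (hF : F.Colorable 2)
    (p : V → ι) (hsurj : Function.Surjective p)
    (hcross : ∀ u v : V, p u ≠ p v → (H.Adj u v ↔ F.Adj (p u) (p v)))
    (hfib : ∀ i : ι, CrossBipartiteSwapping (H.induce (p ⁻¹' {i})) G)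
    (U : Set ι) (u : ι) (hu : u ∉ U) :
    homCount (swapped H F p U) G ≤ homCount (swapped H F p (insert u U)) G := by
  classical
  have key : ∀ Q : Set ι, homCount (swapped H F p Q) G
      = ∑ g : ({x : V × Fin 2 // p x.1 ≠ u} → W), Nat.card (Fib H F G p u Q g) := by
    intro Q
    haveI : Finite (swapped H F p Q →g G) :=
      Finite.of_injective (fun f => (f : V × Fin 2 → W)) DFunLike.coe_injective
    haveI : ∀ g : ({x : V × Fin 2 // p x.1 ≠ u} → W), Finite (Fib H F G p u Q g) :=
      fun g => Subtype.finite
    rw [homCount, Nat.card_congr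
      ((Equiv.sigmaFiberEquiv
        (fun (f : swapped H F p Q →g G) (k : {x : V × Fin 2 // p x.1 ≠ u}) => f k.1)).symm :
        (swapped H F p Q →g G) ≃ Σ g, Fib H F G p u Q g)]
    exact nat_card_sigma _
  rw [key U, key (insert u U)]
  refine Finset.sum_le_sum fun g _ => ?_
  by_cases hg : Good H F G p u U g
  · rw [Nat.card_congr (equivU U hu g hg), Nat.card_prod, Nat.card_congr (equivU' U g hg)]
    exact hfib u (sideSet F G p u g 0) (sideSet F G p u g 1)
  · haveI : IsEmpty (Fib H F G p u U g) := ⟨fun f => hg fun k k' ha => by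
      rw [← congrFun f.2 k, ← congrFun f.2 k']; exact f.1.map_adj ha⟩
    simp [Nat.card_of_isEmpty]
end

section
/- Let F be a bipartite graph and let 𝓗 be a nonempty class of graphs containing K_1. For every 𝓗-blow-up H of F, the graphs H × K_2 and H^{V(F)} are isomorphic. -/
open SimpleGraph

/-- For a blow-up `H` of a bipartite graph `F` (with projection `p`),
the graphs `H × K₂` and `H^{V(F)}` are isomorphic. -/
theorem stmt12 {V ι : Type} [Fintype V] (H : SimpleGraph V) (F : SimpleGraph ι)
    (hF : F.Colorable 2)
    (p : V → ι) (hsurj : Function.Surjective p)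
    (hcross : ∀ u v : V, p u ≠ p v → (H.Adj u v ↔ F.Adj (p u) (p v))) :
    Nonempty (tensorK2 H ≃g swapped H F p Set.univ) := by
  obtain ⟨c⟩ := hF
  have key : ∀ a b u v : Fin 2, a + u = b + v ↔ (u = v ↔ a = b) := by decide
  have inv : ∀ (a b : Fin 2), a + b + b = a := by decide
  refine ⟨⟨⟨fun x => (x.1, x.2 + c (p x.1)), fun x => (x.1, x.2 + c (p x.1)),
    fun x => by simp [inv], fun x => by simp [inv]⟩, ?_⟩⟩
  rintro ⟨x, i⟩ ⟨y, j⟩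
  simp only [swapped, tensorK2, Equiv.coe_fn_mk, Set.mem_univ, true_and,
    not_true, false_and, or_false]
  constructor
  · rintro (⟨hne, hF', heq⟩ | ⟨heq, hH, hne⟩)
    · refine ⟨(hcross _ _ hne).2 hF', ?_⟩
      have hc := c.valid hF'
      rw [key] at heq
      exact fun h => hc (heq.2 h)
    · refine ⟨hH, fun h => hne ?_⟩
      rw [key]
      exact ⟨fun _ => h, fun _ => by rw [heq]⟩
  · rintro ⟨hH, hne⟩
    by_cases hp : p x = p y
    · refine Or.inr ⟨hp, hH, fun h => hne ?_⟩
      rw [key] at h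
      exact h.1 (congrArg c hp)
    · refine Or.inl ⟨hp, (hcross _ _ hp).1 hH, ?_⟩
      rw [key]
      have hc := c.valid ((hcross _ _ hp).1 hH)
      exact ⟨fun h => absurd h hc, fun h => absurd h hne⟩
end
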